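/- arXiv:2402.18703 — 3 statements merged into one kernel-verified Lean document; each statement's English description precedes it below -/
import Mathlib

section
/- Let Φ be a unital quantum channel on M_d(ℂ) that is c-scrambling. Then Φ is fully irreducible: there do not exist orthogonal projections P, Q ∈ M_d(ℂ) with P, Q ∉ {0, 1}, Tr P = Tr Q, and Φ(P) ≤ λQ (in the positive semidefinite order) for some λ > 0. -/
open Matrix Filter
open scoped ComplexOrder

/-- The algebra of `n × n` complex matrices. -/
abbrev Mat (n : ℕ) := Matrix (Fin n) (Fin n) ℂ

/-- A linear map between matrix algebras is a quantum channel if it admits a Kraus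
representation `Φ(X) = ∑ i, K i * X * (K i)ᴴ` with `∑ i, (K i)ᴴ * K i = 1`. -/
def IsChannel {m n : ℕ} (Φ : Matrix (Fin m) (Fin m) ℂ →ₗ[ℂ] Mat n) : Prop :=
  ∃ (p : ℕ) (K : Fin p → Matrix (Fin n) (Fin m) ℂ),
    (∀ X, Φ X = ∑ i, K i * X * (K i)ᴴ) ∧ ∑ i, (K i)ᴴ * K i = 1

/-- A quantum state: positive semidefinite with unit trace. -/
def IsState {n : ℕ} (ρ : Mat n) : Prop := ρ.PosSemidef ∧ ρ.trace = 1

/-- The rank-one matrix `|ψ⟩⟨ψ|`. -/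
def pureState {ι : Type*} (ψ : ι → ℂ) : Matrix ι ι ℂ :=
  Matrix.of fun i j => ψ i * star (ψ j)

/-- `ψ` is a unit vector. -/
def IsUnitVec {ι : Type*} [Fintype ι] (ψ : ι → ℂ) : Prop :=
  ∑ i, star (ψ i) * ψ i = 1

/-- c-scrambling: outputs of orthogonal pure states are never orthogonal. -/
def CScrambling {n : ℕ} (Φ : Mat n →ₗ[ℂ] Mat n) : Prop :=
  ∀ ψ φ : Fin n → ℂ, IsUnitVec ψ → IsUnitVec φ → ∑ i, star (ψ i) * φ i = 0 →
    0 < (Φ (pureState ψ) * Φ (pureState φ)).trace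

/-- A subspace `C ⊆ ℂ^n` is correctable for `Φ`. -/
def Correctable {n : ℕ} (Φ : Mat n →ₗ[ℂ] Mat n) (C : Submodule ℂ (Fin n → ℂ)) : Prop :=
  ∃ R : Mat n →ₗ[ℂ] Mat n, IsChannel R ∧
    ∀ ρ : Mat n, IsState ρ → LinearMap.range ρ.mulVecLin ≤ C → R (Φ ρ) = ρ

/-- q-scrambling: no correctable subspace of dimension ≥ 2. -/
def QScrambling {n : ℕ} (Φ : Mat n →ₗ[ℂ] Mat n) : Prop :=
  ∀ C : Submodule ℂ (Fin n → ℂ), Correctable Φ C → Module.finrank ℂ C ≤ 1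

/-- Apply `Φ` to the first tensor factor: `(Φ ⊗ id) M`. -/
def tensorId {d₀ n d₁ : ℕ} (Φ : Matrix (Fin d₀) (Fin d₀) ℂ →ₗ[ℂ] Mat n)
    (M : Matrix (Fin d₀ × Fin d₁) (Fin d₀ × Fin d₁) ℂ) :
    Matrix (Fin n × Fin d₁) (Fin n × Fin d₁) ℂ :=
  Matrix.of fun p q => Φ (Matrix.of fun k l => M (k, p.2) (l, q.2)) p.1 q.1

/-- Vanishing one-shot zero-error entanglement-assisted classical capacity. -/
def VanishingC0E {n : ℕ} (Φ : Mat n →ₗ[ℂ] Mat n) : Prop :=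
  ∀ (d₀ d₁ : ℕ), 0 < d₀ → 0 < d₁ → ∀ ψ : Fin d₀ × Fin d₁ → ℂ, IsUnitVec ψ →
    ∀ E₁ E₂ : Matrix (Fin d₀) (Fin d₀) ℂ →ₗ[ℂ] Mat n, IsChannel E₁ → IsChannel E₂ →
      0 < (tensorId (Φ ∘ₗ E₁) (pureState ψ) * tensorId (Φ ∘ₗ E₂) (pureState ψ)).trace

/-- Mixing channel: `Φ^n X → Tr(X) ρ⋆` entrywise. -/
def Mixing {n : ℕ} (Φ : Module.End ℂ (Mat n)) : Prop :=
  ∃ ρ : Mat n, IsState ρ ∧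
    ∀ X : Mat n, Tendsto (fun k => (Φ ^ k) X) atTop (nhds (X.trace • ρ))

/-- Strictly positive channel: every state is sent to a positive definite matrix. -/
def StrictlyPositive {n : ℕ} (Φ : Mat n →ₗ[ℂ] Mat n) : Prop :=
  ∀ ρ : Mat n, IsState ρ → (Φ ρ).PosDef

/-- Primitive channel: mixing with positive definite invariant state. -/
def Primitive {n : ℕ} (Φ : Module.End ℂ (Mat n)) : Prop :=
  ∃ ρ : Mat n, IsState ρ ∧ ρ.PosDef ∧
    ∀ X : Mat n, Tendsto (fun k => (Φ ^ k) X) atTop (nhds (X.trace • ρ))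

/-- Classical scrambling time `c(Φ)`. -/
noncomputable def cTime {n : ℕ} (Φ : Module.End ℂ (Mat n)) : ℕ∞ :=
  sInf {N : ℕ∞ | ∃ k : ℕ, N = k ∧ 1 ≤ k ∧ CScrambling (Φ ^ k)}

/-- Quantum scrambling time `q(Φ)`. -/
noncomputable def qTime {n : ℕ} (Φ : Module.End ℂ (Mat n)) : ℕ∞ :=
  sInf {N : ℕ∞ | ∃ k : ℕ, N = k ∧ 1 ≤ k ∧ QScrambling (Φ ^ k)}

/-- Entanglement-assisted classical scrambling time `c_E(Φ)`. -/
noncomputable def cETime {n : ℕ} (Φ : Module.End ℂ (Mat n)) : ℕ∞ :=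
  sInf {N : ℕ∞ | ∃ k : ℕ, N = k ∧ 1 ≤ k ∧ VanishingC0E (Φ ^ k)}

/-- Wielandt index `w(Φ)`. -/
noncomputable def wTime {n : ℕ} (Φ : Module.End ℂ (Mat n)) : ℕ∞ :=
  sInf {N : ℕ∞ | ∃ k : ℕ, N = k ∧ 1 ≤ k ∧ StrictlyPositive (Φ ^ k)}

/-- `M(Φ)`: the maximal size of a zero-error classical code for `Φ`. -/
noncomputable def Mclassical {n : ℕ} (Φ : Mat n →ₗ[ℂ] Mat n) : ℕ :=
  sSup {M : ℕ | ∃ ψ : Fin M → Fin n → ℂ, (∀ m, IsUnitVec (ψ m)) ∧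
    ∀ m m', m ≠ m' → (Φ (pureState (ψ m)) * Φ (pureState (ψ m'))).trace = 0}

/-- `D(Φ)`: the maximal dimension of a correctable subspace for `Φ`. -/
noncomputable def Dquantum {n : ℕ} (Φ : Mat n →ₗ[ℂ] Mat n) : ℕ :=
  sSup {M : ℕ | ∃ C : Submodule ℂ (Fin n → ℂ), Correctable Φ C ∧ Module.finrank ℂ C = M}

/-- `M_E(Φ)`: the maximal size of an entanglement-assisted zero-error classical code. -/
noncomputable def MEclassical {n : ℕ} (Φ : Mat n →ₗ[ℂ] Mat n) : ℕ :=
  sSup {M : ℕ | ∃ (d₀ d₁ : ℕ) (ψ : Fin d₀ × Fin d₁ → ℂ), 0 < d₀ ∧ 0 < d₁ ∧ IsUnitVec ψ ∧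
    ∃ E : Fin M → (Matrix (Fin d₀) (Fin d₀) ℂ →ₗ[ℂ] Mat n),
      (∀ m, IsChannel (E m)) ∧
      ∀ m m', m ≠ m' →
        (tensorId (Φ ∘ₗ E m) (pureState ψ) * tensorId (Φ ∘ₗ E m') (pureState ψ)).trace = 0}

/-- The ordered product `K_{i 0} ⋯ K_{i (n-1)}` of Kraus operators. -/
noncomputable def krausProd {d p : ℕ} (K : Fin p → Mat d) {n : ℕ} (i : Fin n → Fin p) : Mat d :=
  (List.ofFn fun t => K (i t)).prod

/-- The operator system of `Φ^n`, for `Φ` with Kraus operators `K`. -/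
noncomputable def opSys {d p : ℕ} (K : Fin p → Mat d) (n : ℕ) : Submodule ℂ (Mat d) :=
  Submodule.span ℂ {X | ∃ i j : Fin n → Fin p, X = (krausProd K i)ᴴ * krausProd K j}

/-- `𝒦_n(Φ)`: the span of `n`-fold products of Kraus operators. -/
noncomputable def kSpan {d p : ℕ} (K : Fin p → Mat d) (n : ℕ) : Submodule ℂ (Mat d) :=
  Submodule.span ℂ {X | ∃ i : Fin n → Fin p, X = krausProd K i}

/-- `A` is column stochastic. -/
def ColumnStochastic {d : ℕ} (A : Matrix (Fin d) (Fin d) ℝ) : Prop :=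
  (∀ i j, 0 ≤ A i j) ∧ ∀ j, ∑ i, A i j = 1

/-- The CDUC map `Φ_{A,B}(X) = ∑ᵢⱼ A i j * X j j |i⟩⟨i| + ∑_{i≠j} B i j * X i j |i⟩⟨j|`. -/
noncomputable def cducMap {d : ℕ} (A : Matrix (Fin d) (Fin d) ℝ) (B : Mat d) :
    Mat d →ₗ[ℂ] Mat d where
  toFun X := Matrix.of fun i j =>
    if i = j then ∑ k, (A i k : ℂ) * X k k else B i j * X i j
  map_add' X Y := by
    ext i j
    by_cases h : i = j <;>
      simp [h, Matrix.add_apply, mul_add, Finset.sum_add_distrib]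
  map_smul' c X := by
    ext i j
    by_cases h : i = j <;>
      simp [h, Matrix.smul_apply, smul_eq_mul, Finset.mul_sum, mul_left_comm]

/-- The DUC map `Φ_{A,C}(X) = ∑ᵢⱼ A i j * X j j |i⟩⟨i| + ∑_{i≠j} C i j * X j i |i⟩⟨j|`. -/
noncomputable def ducMap {d : ℕ} (A : Matrix (Fin d) (Fin d) ℝ) (C : Mat d) :
    Mat d →ₗ[ℂ] Mat d where
  toFun X := Matrix.of fun i j =>
    if i = j then ∑ k, (A i k : ℂ) * X k k else C i j * X j i
  map_add' X Y := by
    ext i j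
    by_cases h : i = j <;>
      simp [h, Matrix.add_apply, mul_add, Finset.sum_add_distrib]
  map_smul' c X := by
    ext i j
    by_cases h : i = j <;>
      simp [h, Matrix.smul_apply, smul_eq_mul, Finset.mul_sum, mul_left_comm]

/-- The classical channel `Φ_A(X) = ∑ᵢⱼ A i j * X j j |i⟩⟨i|` of a stochastic matrix `A`. -/
noncomputable def classicalChannel {d : ℕ} (A : Matrix (Fin d) (Fin d) ℝ) :
    Mat d →ₗ[ℂ] Mat d :=
  cducMap A 0

/-- A stochastic matrix is scrambling if any two columns overlap in some row. -/
def MatScrambling {d : ℕ} (A : Matrix (Fin d) (Fin d) ℝ) : Prop :=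
  ∀ i j, ∃ k, 0 < A k i * A k j

/-- A matrix with strictly positive entries. -/
def MatStrictlyPositive {d : ℕ} (A : Matrix (Fin d) (Fin d) ℝ) : Prop :=
  ∀ i j, 0 < A i j

/-- A stochastic matrix is mixing if `1` is an eigenvalue of algebraic multiplicity one
and there is no other eigenvalue of modulus one. -/
def MatMixing {d : ℕ} (A : Matrix (Fin d) (Fin d) ℝ) : Prop :=
  Polynomial.rootMultiplicity 1 (Matrix.charpoly (A.map Complex.ofReal)) = 1 ∧
  ∀ μ : ℂ, ‖μ‖ = 1 → (Matrix.charpoly (A.map Complex.ofReal)).IsRoot μ → μ = 1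

/-- A stochastic matrix is primitive if it is mixing and its invariant probability
vector is entrywise strictly positive. -/
def MatPrimitive {d : ℕ} (A : Matrix (Fin d) (Fin d) ℝ) : Prop :=
  MatMixing A ∧
    ∀ v : Fin d → ℝ, (∀ i, 0 ≤ v i) → ∑ i, v i = 1 → A *ᵥ v = v → ∀ i, 0 < v i

/-- The scrambling time of a stochastic matrix. -/
noncomputable def cMat {d : ℕ} (A : Matrix (Fin d) (Fin d) ℝ) : ℕ∞ :=
  sInf {N : ℕ∞ | ∃ k : ℕ, N = k ∧ 1 ≤ k ∧ MatScrambling (A ^ k)}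

/-- The Wielandt index of a stochastic matrix. -/
noncomputable def wMat {d : ℕ} (A : Matrix (Fin d) (Fin d) ℝ) : ℕ∞ :=
  sInf {N : ℕ∞ | ∃ k : ℕ, N = k ∧ 1 ≤ k ∧ MatStrictlyPositive (A ^ k)}

/-- The matrix `A_d` from the paper (0-indexed). -/
noncomputable def Amat (d : ℕ) : Matrix (Fin d) (Fin d) ℝ :=
  Matrix.of fun i j =>
    if (i : ℕ) = d - 1 ∧ (j : ℕ) = 0 then 1
    else if (j : ℕ) = 1 ∧ ((i : ℕ) = 0 ∨ (i : ℕ) = d - 1) then 1 / 2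
    else if 2 ≤ (j : ℕ) ∧ (i : ℕ) + 1 = (j : ℕ) then 1
    else 0

lemma herm_idem_psd {d : ℕ} {M : Mat d} (h1 : Mᴴ = M) (h2 : M * M = M) : M.PosSemidef := by
  have : M = Mᴴ * M := by rw [h1, h2]
  rw [this]; exact posSemidef_conjTranspose_mul_self M

lemma channel_pos {d : ℕ} {Φ : Mat d →ₗ[ℂ] Mat d} (hΦ : IsChannel Φ) {X : Mat d}
    (hX : X.PosSemidef) : (Φ X).PosSemidef := by
  obtain ⟨p, K, hK, -⟩ := hΦ
  rw [hK]
  classical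
  induction (Finset.univ : Finset (Fin p)) using Finset.induction with
  | empty => simpa using Matrix.PosSemidef.zero
  | insert _ _ h ih =>
      rw [Finset.sum_insert h]
      exact ((hX.mul_mul_conjTranspose_same _)).add ih

lemma channel_trace {d : ℕ} {Φ : Mat d →ₗ[ℂ] Mat d} (hΦ : IsChannel Φ) (X : Mat d) :
    (Φ X).trace = X.trace := by
  obtain ⟨p, K, hK, hsum⟩ := hΦ
  rw [hK, Matrix.trace_sum]
  have : ∀ i, (K i * X * (K i)ᴴ).trace = ((K i)ᴴ * K i * X).trace := by
    intro i
    rw [Matrix.trace_mul_cycle]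
  simp_rw [this]
  rw [← Matrix.trace_sum, ← Finset.sum_mul, hsum, one_mul]

open scoped MatrixOrder in
lemma psd_eq_star_mul_self {d : ℕ} {A : Mat d} (hA : A.PosSemidef) : ∃ B : Mat d, A = Bᴴ * B := by
  obtain ⟨B, rfl⟩ := CStarAlgebra.nonneg_iff_eq_star_mul_self.mp hA.nonneg
  exact ⟨B, rfl⟩

lemma psd_trace_zero {d : ℕ} {A : Mat d} (hA : A.PosSemidef) (h : A.trace = 0) : A = 0 := by
  obtain ⟨B, rfl⟩ := psd_eq_star_mul_self hA
  have key : (Bᴴ * B).trace = ((∑ j, ∑ i, Complex.normSq (B i j) : ℝ) : ℂ) := by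
    simp only [Matrix.trace, Matrix.diag, Matrix.mul_apply, Matrix.conjTranspose_apply]
    push_cast
    refine Finset.sum_congr rfl fun j _ => Finset.sum_congr rfl fun i _ => ?_
    rw [Complex.normSq_eq_conj_mul_self]; rfl
  rw [key] at h
  norm_cast at h
  have hz : ∀ i j, B i j = 0 := by
    intro i j
    have h1 : ∀ j ∈ Finset.univ, (0:ℝ) ≤ ∑ i, Complex.normSq (B i j) :=
      fun j _ => Finset.sum_nonneg fun i _ => Complex.normSq_nonneg _
    have h2 := (Finset.sum_eq_zero_iff_of_nonneg h1).mp h j (Finset.mem_univ j)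
    have h3 := (Finset.sum_eq_zero_iff_of_nonneg
      (fun i _ => Complex.normSq_nonneg (B i j))).mp h2 i (Finset.mem_univ i)
    exact Complex.normSq_eq_zero.mp h3
  have : B = 0 := by ext i j; exact hz i j
  simp [this]

lemma psd_trace_real {d : ℕ} {A : Mat d} (hA : A.PosSemidef) :
    ∃ r : ℝ, 0 ≤ r ∧ A.trace = (r : ℂ) ∧ (r = 0 → A = 0) := by
  obtain ⟨B, rfl⟩ := psd_eq_star_mul_self hA
  refine ⟨∑ j, ∑ i, Complex.normSq (B i j),
    Finset.sum_nonneg fun j _ => Finset.sum_nonneg fun i _ => Complex.normSq_nonneg _, ?_, ?_⟩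
  · simp only [Matrix.trace, Matrix.diag, Matrix.mul_apply, Matrix.conjTranspose_apply]
    push_cast
    refine Finset.sum_congr rfl fun j _ => Finset.sum_congr rfl fun i _ => ?_
    rw [Complex.normSq_eq_conj_mul_self]; rfl
  · intro hr
    exact psd_trace_zero (posSemidef_conjTranspose_mul_self B) (by
      simp only [Matrix.trace, Matrix.diag, Matrix.mul_apply, Matrix.conjTranspose_apply]
      rw [show (0:ℂ) = ((0:ℝ):ℂ) by norm_num, ← hr]
      push_cast
      refine Finset.sum_congr rfl fun j _ => Finset.sum_congr rfl fun i _ => ?_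
      rw [Complex.normSq_eq_conj_mul_self]; rfl)

lemma psd_cancel {d : ℕ} {A R : Mat d} (hA : A.PosSemidef) (hR : Rᴴ = R)
    (h : R * A * R = 0) : A * R = 0 := by
  obtain ⟨B, rfl⟩ := psd_eq_star_mul_self hA
  have key : (B * R)ᴴ * (B * R) = 0 := by
    rw [Matrix.conjTranspose_mul, hR]
    calc R * Bᴴ * (B * R) = R * (Bᴴ * B) * R := by simp [mul_assoc]
    _ = 0 := h
  have hBR : B * R = 0 := Matrix.conjTranspose_mul_self_eq_zero.mp key
  rw [mul_assoc, hBR, mul_zero]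

lemma pureState_conjT {d : ℕ} (ψ : Fin d → ℂ) : (pureState ψ)ᴴ = pureState ψ := by
  ext i j
  simp [pureState, Matrix.conjTranspose_apply, mul_comm]

lemma mul_pureState {d : ℕ} {P : Mat d} {ψ : Fin d → ℂ} (h : P *ᵥ ψ = ψ) :
    P * pureState ψ = pureState ψ := by
  ext i j
  have h' := congrFun h i
  simp only [Matrix.mulVec, dotProduct] at h'
  simp only [Matrix.mul_apply, pureState, Matrix.of_apply]
  simp_rw [← mul_assoc]
  rw [← Finset.sum_mul, h']

lemma pureState_mul {d : ℕ} {P : Mat d} {ψ : Fin d → ℂ} (hP : Pᴴ = P) (h : P *ᵥ ψ = ψ) :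
    pureState ψ * P = pureState ψ := by
  have h2 := congrArg Matrix.conjTranspose (mul_pureState h)
  rw [Matrix.conjTranspose_mul, pureState_conjT, hP] at h2
  exact h2

lemma pureState_idem {d : ℕ} {ψ : Fin d → ℂ} (h : IsUnitVec ψ) :
    pureState ψ * pureState ψ = pureState ψ := by
  ext i j
  simp only [Matrix.mul_apply, pureState, Matrix.of_apply]
  have : ∀ k, ψ i * star (ψ k) * (ψ k * star (ψ j))
      = (star (ψ k) * ψ k) * (ψ i * star (ψ j)) := fun k => by ring
  simp_rw [this]
  rw [← Finset.sum_mul, h, one_mul]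

lemma pureState_trace {d : ℕ} {ψ : Fin d → ℂ} (h : IsUnitVec ψ) :
    (pureState ψ).trace = 1 := by
  unfold IsUnitVec at h
  simp only [Matrix.trace, Matrix.diag, pureState, Matrix.of_apply]
  rw [← h]
  exact Finset.sum_congr rfl fun i _ => mul_comm _ _

lemma exists_unit_fixed {d : ℕ} {P : Mat d} (hP2 : P * P = P) (hne : P ≠ 0) :
    ∃ ψ : Fin d → ℂ, IsUnitVec ψ ∧ P *ᵥ ψ = ψ := by
  classical
  have hv : ∃ v, P *ᵥ v ≠ 0 := by
    by_contra hc
    push_neg at hc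
    apply hne
    ext i j
    have := congrFun (hc (Pi.single j 1)) i
    simpa using this
  obtain ⟨v, hv⟩ := hv
  set u := P *ᵥ v with hu
  have hfix : P *ᵥ u = u := by rw [hu, Matrix.mulVec_mulVec, hP2]
  set s : ℝ := ∑ i, Complex.normSq (u i) with hs
  have hspos : 0 < s := by
    obtain ⟨i, hi⟩ := Function.ne_iff.mp hv
    exact Finset.sum_pos' (fun k _ => Complex.normSq_nonneg _)
      ⟨i, Finset.mem_univ i, Complex.normSq_pos.mpr hi⟩
  set c : ℂ := (((Real.sqrt s)⁻¹ : ℝ) : ℂ) with hc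
  refine ⟨c • u, ?_, ?_⟩
  · unfold IsUnitVec
    have : ∀ i, star ((c • u) i) * ((c • u) i)
        = (c * c) * (star (u i) * u i) := by
      intro i
      simp only [Pi.smul_apply, smul_eq_mul, star_mul', hc, Complex.star_def,
        Complex.conj_ofReal]
      ring
    simp_rw [this]
    rw [← Finset.mul_sum]
    have hsum : ∑ i, star (u i) * u i = (s : ℂ) := by
      rw [hs]
      push_cast
      exact Finset.sum_congr rfl fun i _ =>
        (Complex.normSq_eq_conj_mul_self (z := u i)).symm
    rw [hsum, hc]
    norm_cast
    rw [← Real.sqrt_inv]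
    rw [Real.mul_self_sqrt (by positivity)]
    field_simp
  · rw [Matrix.mulVec_smul, hfix]

lemma orth_dot {d : ℕ} {P : Mat d} (hP : Pᴴ = P) {ψ φ : Fin d → ℂ}
    (hψ : P *ᵥ ψ = ψ) (hφ : P *ᵥ φ = 0) : ∑ i, star (ψ i) * φ i = 0 := by
  have h1 : star ψ ⬝ᵥ φ = star (P *ᵥ ψ) ⬝ᵥ φ := by rw [hψ]
  rw [Matrix.star_mulVec, hP, ← Matrix.dotProduct_mulVec, hφ, dotProduct_zero] at h1
  simpa [dotProduct] using h1

lemma psd_and_neg {d : ℕ} {A : Mat d} (h1 : A.PosSemidef) (h2 : (-A).PosSemidef) : A = 0 := by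
  obtain ⟨r1, hr1, ht1, h01⟩ := psd_trace_real h1
  obtain ⟨r2, hr2, ht2, h02⟩ := psd_trace_real h2
  rw [Matrix.trace_neg, ht1] at ht2
  have hr : -r1 = r2 := by exact_mod_cast ht2
  exact h01 (by linarith)

lemma conj_kill {d : ℕ} {X R Z : Mat d} (hX : X.PosSemidef) (hRh : Rᴴ = R)
    (hZX : (Z - X).PosSemidef) (hRZ : R * Z = 0) : X * R = 0 := by
  have hpsd1 : (R * X * R).PosSemidef := by
    have := hX.mul_mul_conjTranspose_same R
    rwa [hRh] at this
  have hpsd2 : (R * (Z - X) * R).PosSemidef := by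
    have := hZX.mul_mul_conjTranspose_same R
    rwa [hRh] at this
  have heq : R * (Z - X) * R = -(R * X * R) := by
    rw [mul_sub, sub_mul, hRZ, Matrix.zero_mul, zero_sub]
  rw [heq] at hpsd2
  exact psd_cancel hX hRh (psd_and_neg hpsd1 hpsd2)

lemma split3 {d : ℕ} (Q A G : Mat d) : Q * A * Q + Q * (G - A) * Q = Q * G * Q := by
  noncomm_ring


/-- A unital c-scrambling channel is fully irreducible: there is no pair
of nontrivial equivalent orthogonal projections `P ∼ Q` with `Φ(P) ≤ λ Q`. -/
theorem unital_scrambling_fully_irreducible (d : ℕ) (Φ : Module.End ℂ (Mat d))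
    (hΦ : IsChannel Φ) (hunital : Φ 1 = 1) (hscr : CScrambling Φ) :
    ¬ ∃ (P Q : Mat d) (lam : ℝ),
        Pᴴ = P ∧ P * P = P ∧ Qᴴ = Q ∧ Q * Q = Q ∧
        P ≠ 0 ∧ P ≠ 1 ∧ Q ≠ 0 ∧ Q ≠ 1 ∧ P.trace = Q.trace ∧
        0 < lam ∧ ((lam : ℂ) • Q - Φ P).PosSemidef := by
  rintro ⟨P, Q, lam, hPh, hP2, hQh, hQ2, hP0, hP1, hQ0, hQ1, htr, hlam, hle⟩
  -- complements
  have hPh' : (1 - P)ᴴ = 1 - P := by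
    rw [Matrix.conjTranspose_sub, hPh, Matrix.conjTranspose_one]
  have hP2' : (1 - P) * (1 - P) = 1 - P := by
    have : (1 - P) * (1 - P) = 1 - P - P + P * P := by noncomm_ring
    rw [this, hP2]; abel
  have hP1' : (1 : Mat d) - P ≠ 0 := fun h => hP1 (by rwa [sub_eq_zero, eq_comm] at h)
  -- unit vectors
  obtain ⟨ψ, hψu, hψfix⟩ := exists_unit_fixed hP2 hP0
  obtain ⟨φ, hφu, hφfix⟩ := exists_unit_fixed hP2' hP1'
  have hφP : P *ᵥ φ = 0 := by
    have := hφfix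
    rw [Matrix.sub_mulVec, Matrix.one_mulVec] at this
    have h2 : φ - P *ᵥ φ = φ := this
    have := sub_eq_self.mp h2
    exact this
  have horth : ∑ i, star (ψ i) * φ i = 0 := orth_dot hPh hψfix hφP
  -- pure-state dominations
  set S0 := pureState ψ with hS0
  set T0 := pureState φ with hT0
  have hPS0 : (P - S0).PosSemidef := by
    refine herm_idem_psd ?_ ?_
    · rw [Matrix.conjTranspose_sub, hPh, hS0, pureState_conjT]
    · have : (P - S0) * (P - S0) = P * P - P * S0 - S0 * P + S0 * S0 := by noncomm_ring
      rw [this, hP2, hS0, mul_pureState hψfix, pureState_mul hPh hψfix, pureState_idem hψu]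
      abel
  have hPT0 : ((1 - P) - T0).PosSemidef := by
    refine herm_idem_psd ?_ ?_
    · rw [Matrix.conjTranspose_sub, hPh', hT0, pureState_conjT]
    · have : ((1 - P) - T0) * ((1 - P) - T0)
          = (1 - P) * (1 - P) - (1 - P) * T0 - T0 * (1 - P) + T0 * T0 := by noncomm_ring
      rw [this, hP2', hT0, mul_pureState hφfix, pureState_mul hPh' hφfix, pureState_idem hφu]
      abel
  -- channel outputs
  set F := Φ P with hFdef
  set S := Φ S0 with hSdef
  set A := Φ T0 with hAdef
  have hFpsd : F.PosSemidef := channel_pos hΦ (herm_idem_psd hPh hP2)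
  have hSpsd : S.PosSemidef := channel_pos hΦ (herm_idem_psd (pureState_conjT ψ) (pureState_idem hψu))
  have hApsd : A.PosSemidef := channel_pos hΦ (herm_idem_psd (pureState_conjT φ) (pureState_idem hφu))
  have hFS : (F - S).PosSemidef := by
    have := channel_pos hΦ hPS0
    rwa [map_sub] at this
  have hGpsd : ((1 : Mat d) - F).PosSemidef := by
    have := channel_pos hΦ (herm_idem_psd hPh' hP2')
    rwa [map_sub, hunital] at this
  have hGA : (((1 : Mat d) - F) - A).PosSemidef := by
    have := channel_pos hΦ hPT0
    rwa [map_sub, map_sub, hunital] at this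
  -- R := 1 - Q
  set R := (1 : Mat d) - Q with hRdef
  have hRh : Rᴴ = R := by
    rw [hRdef, Matrix.conjTranspose_sub, hQh, Matrix.conjTranspose_one]
  have hRQ : R * Q = 0 := by rw [hRdef, sub_mul, one_mul, hQ2, sub_self]
  have hQR : Q * R = 0 := by rw [hRdef, mul_sub, mul_one, hQ2, sub_self]
  have hRZ : R * ((lam : ℂ) • Q) = 0 := by
    rw [Matrix.mul_smul, hRQ, smul_zero]
  have hFR : F * R = 0 := conj_kill hFpsd hRh hle hRZ
  have hSR : S * R = 0 := by
    refine conj_kill hSpsd hRh ?_ hRZ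
    have h := hle.add hFS
    have heq : ((lam : ℂ) • Q - F) + (F - S) = (lam : ℂ) • Q - S := by abel
    rwa [heq] at h
  have hSQ : S * Q = S := by
    have : S * (Q + R) = S := by rw [hRdef]; simp
    rw [mul_add, hSR, add_zero] at this
    exact this
  have hFQ : F * Q = F := by
    have : F * (Q + R) = F := by rw [hRdef]; simp
    rw [mul_add, hFR, add_zero] at this
    exact this
  -- trace of Q G Q is zero
  have htrF : F.trace = Q.trace := by
    rw [hFdef, channel_trace hΦ, htr]
  have hQF : Q * F = F := by
    have := congrArg Matrix.conjTranspose hFQ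
    rwa [Matrix.conjTranspose_mul, hQh, hFpsd.isHermitian.eq] at this
  have htrQGQ : (Q * ((1 : Mat d) - F) * Q).trace = 0 := by
    rw [Matrix.trace_mul_cycle, hQ2, mul_sub, mul_one, Matrix.trace_sub, hQF, htrF, sub_self]
  -- Q A Q = 0
  have hQAQ : Q * A * Q = 0 := by
    have hpsdA : (Q * A * Q).PosSemidef := by
      have := hApsd.mul_mul_conjTranspose_same Q
      rwa [hQh] at this
    have hpsdB : (Q * (((1 : Mat d) - F) - A) * Q).PosSemidef := by
      have := hGA.mul_mul_conjTranspose_same Q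
      rwa [hQh] at this
    obtain ⟨ra, hra, hta, h0a⟩ := psd_trace_real hpsdA
    obtain ⟨rb, hrb, htb, h0b⟩ := psd_trace_real hpsdB
    have hsum := split3 Q A ((1 : Mat d) - F)
    have : (ra : ℂ) + (rb : ℂ) = 0 := by
      rw [← hta, ← htb, ← Matrix.trace_add, hsum, htrQGQ]
    have : ra + rb = 0 := by exact_mod_cast this
    exact h0a (by linarith)
  have hAQ : A * Q = 0 := psd_cancel hApsd hQh hQAQ
  have hQA : Q * A = 0 := by
    have := congrArg Matrix.conjTranspose hAQ
    rwa [Matrix.conjTranspose_mul, hQh, hApsd.isHermitian.eq, Matrix.conjTranspose_zero] at this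
  -- contradiction
  have hzero : (S * A).trace = 0 := by
    rw [← hSQ, mul_assoc, hQA, mul_zero, Matrix.trace_zero]
  have hpos := hscr ψ φ hψu hφu horth
  rw [← hSdef, ← hAdef, hzero] at hpos
  exact lt_irrefl 0 hpos
end

section
/- Let Φ be a quantum channel on M_d(ℂ) whose operator system S_Φ is closed under matrix multiplication. Then the following are equivalent: (1) the one-shot zero-error entanglement-assisted classical capacity of Φ vanishes; (2) Φ is c-scrambling (the one-shot zero-error classical capacity of Φ vanishes); (3) the commutant {X ∈ M_d(ℂ) : XY = YX for all Y ∈ S_Φ} equals ℂ·1. -/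
open Matrix Filter
open scoped ComplexOrder

/-! ### Auxiliary lemmas for `algebra_opSys_scrambling_tfae` -/

section AuxScrambling

open Matrix
open scoped ComplexOrder

lemma aux_trace_pure_mul {ι : Type*} [Fintype ι] (u v : ι → ℂ) :
    (pureState u * pureState v).trace
      = (Complex.normSq (∑ i, star (u i) * v i) : ℂ) := by
  have h : (pureState u * pureState v).trace
      = ∑ p : ι, ∑ q : ι, (star (u q) * v q) * (u p * star (v p)) := by
    simp only [Matrix.trace, Matrix.diag, Matrix.mul_apply, pureState, Matrix.of_apply]
    refine Finset.sum_congr rfl fun p _ => Finset.sum_congr rfl fun q _ => by ring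
  rw [h, Finset.sum_comm, ← Finset.sum_mul_sum]
  rw [← Complex.mul_conj]
  simp [Complex.star_def, mul_comm]

lemma aux_trace_sum_pure {ι γ δ : Type*} [Fintype ι] [Fintype γ] [Fintype δ]
    (v : γ → ι → ℂ) (w : δ → ι → ℂ) :
    ((∑ c, pureState (v c)) * (∑ e, pureState (w e))).trace
      = ((∑ c, ∑ e, Complex.normSq (∑ i, star (v c i) * w e i) : ℝ) : ℂ) := by
  rw [Finset.sum_mul_sum]
  push_cast
  rw [Matrix.trace_sum]
  refine Finset.sum_congr rfl fun c _ => ?_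
  rw [Matrix.trace_sum]
  exact Finset.sum_congr rfl fun e _ => aux_trace_pure_mul _ _

lemma aux_trace_sum_pure_pos {ι γ δ : Type*} [Fintype ι] [Fintype γ] [Fintype δ]
    (v : γ → ι → ℂ) (w : δ → ι → ℂ)
    (h : ¬ ∀ c e, ∑ i, star (v c i) * w e i = 0) :
    0 < ((∑ c, pureState (v c)) * (∑ e, pureState (w e))).trace := by
  rw [aux_trace_sum_pure]
  push_neg at h
  obtain ⟨c, e, hce⟩ := h
  have : (0:ℝ) < ∑ c, ∑ e, Complex.normSq (∑ i, star (v c i) * w e i) := by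
    refine Finset.sum_pos' (fun c _ => Finset.sum_nonneg fun e _ => Complex.normSq_nonneg _) ?_
    exact ⟨c, Finset.mem_univ _, Finset.sum_pos'
      (fun e _ => Complex.normSq_nonneg _)
      ⟨e, Finset.mem_univ _, Complex.normSq_pos.2 hce⟩⟩
  exact_mod_cast this

lemma aux_tensorId_pure {d₀ n d₁ : ℕ} {γ : Type*} [Fintype γ]
    (Θ : Matrix (Fin d₀) (Fin d₀) ℂ →ₗ[ℂ] Mat n)
    (N : γ → Matrix (Fin n) (Fin d₀) ℂ)
    (hΘ : ∀ X, Θ X = ∑ c, N c * X * (N c)ᴴ)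
    (ψ : Fin d₀ × Fin d₁ → ℂ) :
    tensorId Θ (pureState ψ)
      = ∑ c, pureState (fun pr : Fin n × Fin d₁ => ∑ k, N c pr.1 k * ψ (k, pr.2)) := by
  ext pq rs
  simp only [tensorId, Matrix.of_apply, hΘ, Matrix.sum_apply, pureState,
    Matrix.mul_apply, Matrix.conjTranspose_apply]
  refine Finset.sum_congr rfl fun c _ => ?_
  rw [star_sum, Finset.mul_sum]
  refine Finset.sum_congr rfl fun l _ => ?_
  simp only [Finset.sum_mul, star_mul']
  refine Finset.sum_congr rfl fun k _ => ?_
  ring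

lemma aux_channel_pure {n m : ℕ} {γ : Type*} [Fintype γ]
    (K : γ → Matrix (Fin n) (Fin m) ℂ) (ψ : Fin m → ℂ) :
    ∑ i, K i * pureState ψ * (K i)ᴴ
      = ∑ i, pureState (fun a => ∑ k, K i a k * ψ k) := by
  refine Finset.sum_congr rfl fun c _ => ?_
  ext a b
  simp only [Matrix.mul_apply, Matrix.conjTranspose_apply, pureState, Matrix.of_apply]
  rw [star_sum, Finset.mul_sum]
  refine Finset.sum_congr rfl fun l _ => ?_
  simp only [Finset.sum_mul, star_mul']
  refine Finset.sum_congr rfl fun k _ => ?_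
  ring

lemma aux_z_eq {n d₀ d₁ : ℕ} (A B : Matrix (Fin n) (Fin d₀) ℂ) (ψ : Fin d₀ × Fin d₁ → ℂ) :
    ∑ pr : Fin n × Fin d₁, star (∑ k, A pr.1 k * ψ (k, pr.2)) * (∑ l, B pr.1 l * ψ (l, pr.2))
      = ((Aᴴ * B) * (Matrix.of fun l k => ∑ r, ψ (l, r) * star (ψ (k, r)))).trace := by
  rw [Fintype.sum_prod_type]
  simp only [Matrix.trace, Matrix.diag, Matrix.mul_apply, Matrix.of_apply,
    Matrix.conjTranspose_apply, star_sum, star_mul', Finset.sum_mul, Finset.mul_sum]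
  simp only [← Finset.sum_product', Finset.univ_product_univ]
  refine Fintype.sum_bijective (fun x => (x.2.2.2, x.2.2.1, x.2.1, x.1))
    (Function.bijective_iff_has_inverse.mpr
      ⟨fun y => (y.2.2.2, y.2.2.1, y.2.1, y.1), fun x => rfl, fun y => rfl⟩) _ _ fun x => by
      show _ = star (A x.1 x.2.2.2) * B x.1 x.2.2.1 *
        (ψ (x.2.2.1, x.2.1) * star (ψ (x.2.2.2, x.2.1)))
      ring

lemma aux_conj_self_trace_zero {m n' : ℕ} (T : Matrix (Fin m) (Fin n') ℂ)
    (h : (Tᴴ * T).trace = 0) : T = 0 := by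
  have h2 : (Tᴴ * T).trace = ((∑ i, ∑ j, Complex.normSq (T j i) : ℝ) : ℂ) := by
    push_cast
    simp only [Matrix.trace, Matrix.diag, Matrix.mul_apply, Matrix.conjTranspose_apply]
    refine Finset.sum_congr rfl fun i _ => Finset.sum_congr rfl fun j _ => ?_
    rw [mul_comm, Complex.star_def, Complex.mul_conj]
  rw [h2] at h
  have h3 : (∑ i, ∑ j, Complex.normSq (T j i) : ℝ) = 0 := by exact_mod_cast h
  ext a b
  have h4 : ∀ i ∈ (Finset.univ : Finset (Fin n')), ∀ j ∈ (Finset.univ : Finset (Fin m)),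
      Complex.normSq (T j i) = 0 := by
    have := (Finset.sum_eq_zero_iff_of_nonneg fun i _ =>
      Finset.sum_nonneg fun j _ => Complex.normSq_nonneg _).mp h3
    intro i hi j hj
    exact (Finset.sum_eq_zero_iff_of_nonneg fun j _ => Complex.normSq_nonneg _).mp
      (this i hi) j hj
  have := h4 b (Finset.mem_univ _) a (Finset.mem_univ _)
  simpa [Complex.normSq_eq_zero] using this

lemma aux_trace_prod_fin1 {n : ℕ} (A B : Mat n) :
    ((Matrix.of fun p q : Fin n × Fin 1 => A p.1 q.1) *
      (Matrix.of fun p q : Fin n × Fin 1 => B p.1 q.1)).trace = (A * B).trace := by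
  simp [Matrix.trace, Matrix.diag, Matrix.mul_apply, Fintype.sum_prod_type]

noncomputable def matE (d : ℕ) : Mat d ≃ₗ[ℂ] EuclideanSpace ℂ (Fin d × Fin d) :=
  ((LinearEquiv.curry ℂ ℂ (Fin d) (Fin d)).symm).trans (WithLp.linearEquiv 2 ℂ _).symm

lemma matE_apply {d : ℕ} (A : Mat d) (q : Fin d × Fin d) : matE d A q = A q.1 q.2 := rfl

lemma matE_inner {d : ℕ} (A B : Mat d) :
    (inner ℂ (matE d A) (matE d B) : ℂ) = (Aᴴ * B).trace := by
  rw [PiLp.inner_apply, Fintype.sum_prod_type]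
  simp only [Matrix.trace, Matrix.diag, Matrix.mul_apply, Matrix.conjTranspose_apply]
  rw [Finset.sum_comm]
  refine Finset.sum_congr rfl fun a _ => Finset.sum_congr rfl fun b _ => ?_
  simp [matE_apply, RCLike.inner_apply, Complex.star_def, mul_comm]

lemma matE_adj {d : ℕ} (X W Y : Mat d) :
    (inner ℂ (matE d W) (matE d (X * Y)) : ℂ) = inner ℂ (matE d (Xᴴ * W)) (matE d Y) := by
  simp only [matE_inner, Matrix.conjTranspose_mul, Matrix.conjTranspose_conjTranspose,
    Matrix.mul_assoc]

lemma aux_comm_top {d : ℕ} (S : Submodule ℂ (Mat d))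
    (hone : (1 : Mat d) ∈ S)
    (hstar : ∀ X ∈ S, Xᴴ ∈ S)
    (halg : ∀ X ∈ S, ∀ Y ∈ S, X * Y ∈ S)
    (hcomm : ∀ X : Mat d, (∀ Y ∈ S, X * Y = Y * X) → ∃ c : ℂ, X = c • (1 : Mat d)) :
    ∀ T : Mat d, T ∈ S := by
  classical
  set e := matE d with he
  set S2 : Submodule ℂ (EuclideanSpace ℂ (Fin d × Fin d)) := S.map (e : Mat d →ₗ[ℂ] _)
    with hS2
  haveI : FiniteDimensional ℂ (EuclideanSpace ℂ (Fin d × Fin d)) := by infer_instance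
  set P : Mat d →ₗ[ℂ] Mat d :=
    (e.symm.toLinearMap.comp
      ((S2.subtype.comp (S2.orthogonalProjectionOnto).toLinearMap).comp e.toLinearMap)) with hP
  have hPapp : ∀ Z : Mat d, P Z = e.symm ((S2.orthogonalProjectionOnto (e Z) : _)) := fun _ => rfl
  have hmemS2 : ∀ W ∈ S, e W ∈ S2 := fun W hW => Submodule.mem_map_of_mem hW
  have hP_mem : ∀ Z : Mat d, P Z ∈ S := by
    intro Z
    have h2 : ((S2.orthogonalProjectionOnto (e Z) : _) : EuclideanSpace ℂ (Fin d × Fin d)) ∈ S2 :=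
      (S2.orthogonalProjectionOnto (e Z)).2
    obtain ⟨W, hW, hEW⟩ := h2
    rw [hPapp, ← hEW]
    simpa using hW
  have hP_eq : ∀ Z ∈ S, P Z = Z := by
    intro Z hZ
    rw [hPapp, ← Submodule.starProjection_apply, Submodule.starProjection_eq_self_iff.mpr (hmemS2 Z hZ)]
    simp
  have hP_perp : ∀ Z : Mat d, ∀ W ∈ S, (inner ℂ (e W) (e Z - e (P Z)) : ℂ) = 0 := by
    intro Z W hW
    have h1 : e (P Z) = ((S2.orthogonalProjectionOnto (e Z) : _) : EuclideanSpace ℂ (Fin d × Fin d)) := by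
      rw [hPapp]; simp
    rw [h1]
    exact (Submodule.mem_orthogonal S2 _).mp (Submodule.sub_starProjection_mem_orthogonal (K := S2) (e Z))
      (e W) (hmemS2 W hW)
  -- step 1 : P is an S-module map
  have step1 : ∀ X ∈ S, ∀ Z : Mat d, P (X * Z) = X * P Z := by
    intro X hX Z
    have hzero : P (X * (Z - P Z)) = 0 := by
      have hperp : e (X * (Z - P Z)) ∈ S2ᗮ := by
        rw [Submodule.mem_orthogonal]
        rintro u ⟨W, hW, rfl⟩
        have := matE_adj X W (Z - P Z)
        rw [LinearEquiv.coe_coe]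
        rw [this]
        have h2 : e (Z - P Z) = e Z - e (P Z) := by simp
        rw [h2]
        exact hP_perp Z (Xᴴ * W) (halg _ (hstar X hX) _ hW)
      rw [hPapp, Submodule.orthogonalProjectionOnto_apply_of_mem_orthogonal hperp]
      simp
    have hXPZ : P (X * P Z) = X * P Z := hP_eq _ (halg X hX _ (hP_mem Z))
    have hsplit : X * Z = X * P Z + X * (Z - P Z) := by rw [mul_sub]; abel
    rw [hsplit, map_add, hXPZ, hzero, add_zero]
  -- step 2 : the block matrices lie in the commutant
  have step2 : ∀ j k : Fin d, ∃ c : ℂ,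
      (Matrix.of fun a b => P (Matrix.single b k 1) a j) = c • (1 : Mat d) := by
    intro j k
    refine hcomm _ fun X hX => ?_
    have hXE : ∀ c : Fin d, X * Matrix.single c k (1:ℂ) = ∑ b, X b c • Matrix.single b k 1 := by
      intro c
      ext a b'
      simp [Matrix.mul_apply, Matrix.single, Matrix.sum_apply, Finset.mul_sum,
        mul_ite, ite_and]
    ext a c
    have h1 : P (X * Matrix.single c k (1:ℂ)) = ∑ b, X b c • P (Matrix.single b k 1) := by
      rw [hXE, map_sum]
      exact Finset.sum_congr rfl fun b _ => by rw [_root_.map_smul]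
    have h2 := step1 X hX (Matrix.single c k (1:ℂ))
    have h3 : (∑ b, X b c • P (Matrix.single b k 1)) a j = (X * P (Matrix.single c k 1)) a j := by
      rw [← h1, h2]
    simp only [Matrix.sum_apply, Matrix.smul_apply, smul_eq_mul, Matrix.mul_apply] at h3
    simp only [Matrix.mul_apply, Matrix.of_apply]
    calc ∑ x, P (Matrix.single x k 1) a j * X x c
        = ∑ x, X x c * P (Matrix.single x k 1) a j :=
          Finset.sum_congr rfl fun x _ => mul_comm _ _
      _ = ∑ x, X a x * P (Matrix.single c k 1) x j := h3
  choose cf hcf using step2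
  -- evaluation of P on arbitrary T
  have hPT : ∀ (T : Mat d) (a j : Fin d), P T a j = ∑ k, cf j k * T a k := by
    intro T a j
    have hT : T = ∑ k, ∑ b, T b k • Matrix.single b k (1:ℂ) := by
      ext a' b'
      simp [Matrix.sum_apply, Matrix.single, ite_and]
    conv_lhs => rw [hT]
    rw [map_sum]
    simp only [map_sum, _root_.map_smul, Matrix.sum_apply, Matrix.smul_apply, smul_eq_mul]
    refine Finset.sum_congr rfl fun k _ => ?_
    have hval : ∀ b, P (Matrix.single b k (1:ℂ)) a j = cf j k * (if a = b then 1 else 0) := by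
      intro b
      have h := congrArg (fun M : Mat d => M a b) (hcf j k)
      simpa [Matrix.one_apply] using h
    simp [hval, mul_ite, mul_comm]
  have hcf_val : ∀ j a : Fin d, cf j a = (1 : Mat d) a j := by
    intro j a
    have h := hPT 1 a j
    rw [hP_eq 1 hone] at h
    simp only [Matrix.one_apply, mul_ite, mul_one, mul_zero, Finset.sum_ite_eq,
      Finset.mem_univ, if_true] at h
    exact h.symm
  intro T
  have hfix : P T = T := by
    ext a j
    rw [hPT T a j]
    simp only [hcf_val, Matrix.one_apply]
    simp [eq_comm]
  rw [← hfix]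
  exact hP_mem T

end AuxScrambling


/-- For a channel whose operator system `S_Φ` is closed under matrix
multiplication, vanishing of the one-shot zero-error entanglement-assisted classical
capacity, c-scrambling, and triviality of the commutant of `S_Φ` are all equivalent. -/
theorem algebra_opSys_scrambling_tfae (d p : ℕ) (K : Fin p → Mat d)
    (Φ : Module.End ℂ (Mat d))
    (hK : ∀ X, Φ X = ∑ i, K i * X * (K i)ᴴ) (hTP : ∑ i, (K i)ᴴ * K i = 1)
    (S : Submodule ℂ (Mat d))
    (hS : S = Submodule.span ℂ {X : Mat d | ∃ i j : Fin p, X = (K i)ᴴ * K j})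
    (halg : ∀ X ∈ S, ∀ Y ∈ S, X * Y ∈ S) :
    (VanishingC0E Φ ↔ CScrambling Φ) ∧
    (CScrambling Φ ↔
      ∀ X : Mat d, (∀ Y ∈ S, X * Y = Y * X) ↔ ∃ c : ℂ, X = c • (1 : Mat d)) := by
  classical
  have hgen : ∀ i j : Fin p, (K i)ᴴ * K j ∈ S := fun i j =>
    hS ▸ Submodule.subset_span ⟨i, j, rfl⟩
  have h1S : (1 : Mat d) ∈ S := by
    rw [← hTP]
    exact Submodule.sum_mem _ fun i _ => hgen i i
  have hstarS : ∀ X ∈ S, Xᴴ ∈ S := by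
    intro X hX
    rw [hS] at hX ⊢
    induction hX using Submodule.span_induction with
    | mem x h =>
      obtain ⟨i, j, rfl⟩ := h
      rw [Matrix.conjTranspose_mul, Matrix.conjTranspose_conjTranspose]
      exact Submodule.subset_span ⟨j, i, rfl⟩
    | zero => simp
    | add x y hx hy ihx ihy =>
      rw [Matrix.conjTranspose_add]; exact Submodule.add_mem _ ihx ihy
    | smul a x hx ih =>
      rw [Matrix.conjTranspose_smul]; exact Submodule.smul_mem _ _ ih
  -- the inner-product facts for `EuclideanSpace`
  have hinner : ∀ (m : ℕ) (x y : EuclideanSpace ℂ (Fin m)),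
      (inner ℂ x y : ℂ) = ∑ k, star (x k) * y k := by
    intro m x y
    simp [PiLp.inner_apply, RCLike.inner_apply, Complex.star_def, mul_comm]
  -- (2) → (3)
  have lemD : CScrambling Φ → ∀ X : Mat d,
      (∀ Y ∈ S, X * Y = Y * X) → ∃ c : ℂ, X = c • (1 : Mat d) := by
    intro hcs
    -- first the Hermitian case
    have hherm : ∀ H : Mat d, H.IsHermitian → (∀ Y ∈ S, H * Y = Y * H) →
        ∃ c : ℂ, H = c • (1 : Mat d) := by
      intro H hH hHc
      by_cases hall : ∀ i j : Fin d, hH.eigenvalues i = hH.eigenvalues j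
      · by_cases hd0 : d = 0
        · exact ⟨0, by ext i j; exact absurd i.2 (by omega)⟩
        · refine ⟨(hH.eigenvalues ⟨0, Nat.pos_of_ne_zero hd0⟩ : ℂ), ?_⟩
          have hdiag : Matrix.diagonal (RCLike.ofReal ∘ hH.eigenvalues)
              = (hH.eigenvalues ⟨0, Nat.pos_of_ne_zero hd0⟩ : ℂ) • (1 : Mat d) := by
            ext a b
            by_cases hab : a = b
            · subst hab
              simp [Matrix.diagonal, Matrix.one_apply, hall a ⟨0, Nat.pos_of_ne_zero hd0⟩]
            · simp [Matrix.diagonal_apply_ne _ hab, Matrix.one_apply, hab]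
          conv_lhs => rw [hH.spectral_theorem]
          rw [hdiag, map_smul, map_one]
      · push_neg at hall
        obtain ⟨i, j, hij⟩ := hall
        have hijne : i ≠ j := fun h => hij (by rw [h])
        set ψ : EuclideanSpace ℂ (Fin d) := hH.eigenvectorBasis i with hψdef
        set φ : EuclideanSpace ℂ (Fin d) := hH.eigenvectorBasis j with hφdef
        have horthon := orthonormal_iff_ite.mp hH.eigenvectorBasis.orthonormal
        have hu1 : IsUnitVec (ψ : Fin d → ℂ) := by
          have := horthon i i
          rw [hinner d ψ ψ] at this
          simpa [IsUnitVec] using this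
        have hu2 : IsUnitVec (φ : Fin d → ℂ) := by
          have := horthon j j
          rw [hinner d φ φ] at this
          simpa [IsUnitVec] using this
        have horth : ∑ k, star (ψ k) * φ k = 0 := by
          have := horthon i j
          rw [hinner d ψ φ] at this
          simpa [hijne] using this
        have hmvψ : H *ᵥ (ψ : Fin d → ℂ) = hH.eigenvalues i • (ψ : Fin d → ℂ) :=
          hH.mulVec_eigenvectorBasis i
        have hmvφ : H *ᵥ (φ : Fin d → ℂ) = hH.eigenvalues j • (φ : Fin d → ℂ) :=
          hH.mulVec_eigenvectorBasis j
        have h0 := hcs ψ φ hu1 hu2 horth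
        -- but in fact the trace is zero
        have key : ∀ Y ∈ S, star (ψ : Fin d → ℂ) ⬝ᵥ (Y *ᵥ φ) = 0 := by
          intro Y hY
          set u : Fin d → ℂ := Y *ᵥ φ with hu
          have e1 : H *ᵥ u = hH.eigenvalues j • u := by
            rw [hu, Matrix.mulVec_mulVec, hHc Y hY, ← Matrix.mulVec_mulVec,
              hmvφ, Matrix.mulVec_smul]
          have way1 : star (ψ : Fin d → ℂ) ⬝ᵥ (H *ᵥ u)
              = (hH.eigenvalues j : ℂ) * (star (ψ : Fin d → ℂ) ⬝ᵥ u) := by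
            rw [e1]
            rw [dotProduct_smul]
            simp [Complex.real_smul]
          have way2 : star (ψ : Fin d → ℂ) ⬝ᵥ (H *ᵥ u)
              = (hH.eigenvalues i : ℂ) * (star (ψ : Fin d → ℂ) ⬝ᵥ u) := by
            rw [Matrix.dotProduct_mulVec]
            have hsm : star ((ψ : Fin d → ℂ)) ᵥ* H = star (H *ᵥ (ψ : Fin d → ℂ)) := by
              rw [Matrix.star_mulVec, hH.eq]
            rw [hsm, hmvψ]
            rw [star_smul, smul_dotProduct]
            simp [Complex.real_smul]
          have : ((hH.eigenvalues i : ℂ) - (hH.eigenvalues j : ℂ))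
              * (star (ψ : Fin d → ℂ) ⬝ᵥ u) = 0 := by
            rw [sub_mul, ← way1, ← way2, sub_self]
          rcases mul_eq_zero.mp this with h | h
          · exact absurd (sub_eq_zero.mp h) (by exact_mod_cast hij)
          · exact h
        have hzero : ∀ i' j' : Fin p,
            ∑ a, star (∑ k, K i' a k * ψ k) * (∑ l, K j' a l * φ l) = 0 := by
          intro i' j'
          show star (K i' *ᵥ (ψ : Fin d → ℂ)) ⬝ᵥ (K j' *ᵥ (φ : Fin d → ℂ)) = 0
          rw [Matrix.star_mulVec, ← Matrix.dotProduct_mulVec, Matrix.mulVec_mulVec]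
          exact key _ (hgen i' j')
        rw [hK, hK, aux_channel_pure, aux_channel_pure, aux_trace_sum_pure] at h0
        simp only [hzero, Complex.normSq_zero, Finset.sum_const, smul_zero,
          Complex.ofReal_zero] at h0
        exact absurd h0 (lt_irrefl _)
    intro X hX
    have hX' : ∀ Y ∈ S, Xᴴ * Y = Y * Xᴴ := by
      intro Y hY
      have h := hX Yᴴ (hstarS Y hY)
      calc Xᴴ * Y = (Yᴴ * X)ᴴ := by
            rw [Matrix.conjTranspose_mul, Matrix.conjTranspose_conjTranspose]
        _ = (X * Yᴴ)ᴴ := by rw [h]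
        _ = Y * Xᴴ := by
            rw [Matrix.conjTranspose_mul, Matrix.conjTranspose_conjTranspose]
    obtain ⟨c₁, hc₁⟩ := hherm (X + Xᴴ)
      (by
        unfold Matrix.IsHermitian
        rw [Matrix.conjTranspose_add, Matrix.conjTranspose_conjTranspose, add_comm])
      (fun Y hY => by rw [Matrix.add_mul, Matrix.mul_add, hX Y hY, hX' Y hY])
    obtain ⟨c₂, hc₂⟩ := hherm (Complex.I • (X - Xᴴ))
      (by
        unfold Matrix.IsHermitian
        rw [Matrix.conjTranspose_smul, Matrix.conjTranspose_sub,
          Matrix.conjTranspose_conjTranspose, Complex.star_def, Complex.conj_I]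
        module)
      (fun Y hY => by
        rw [Matrix.smul_mul, Matrix.mul_smul, Matrix.sub_mul, Matrix.mul_sub,
          hX Y hY, hX' Y hY])
    refine ⟨(c₁ - Complex.I * c₂) / 2, ?_⟩
    have e3 : X - Xᴴ = (- (Complex.I * c₂)) • (1 : Mat d) := by
      have h := congrArg (fun M : Mat d => (-Complex.I) • M) hc₂
      simp only [smul_smul] at h
      rw [neg_mul, Complex.I_mul_I, neg_neg, one_smul] at h
      rw [h, neg_mul]
    have h2 : (2 : ℂ) • X = (c₁ - Complex.I * c₂) • (1 : Mat d) := by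
      have : (2 : ℂ) • X = (X + Xᴴ) + (X - Xᴴ) := by module
      rw [this, hc₁, e3, ← add_smul]
      ring_nf
    have := congrArg (fun M : Mat d => (2⁻¹ : ℂ) • M) h2
    simp only [smul_smul] at this
    norm_num at this
    rw [this]
    congr 1
    ring
  -- (3) → vanishing C0E
  have lemB : (∀ X : Mat d, (∀ Y ∈ S, X * Y = Y * X) → ∃ c : ℂ, X = c • (1 : Mat d)) →
      VanishingC0E Φ := by
    intro h3
    have hStop : ∀ T : Mat d, T ∈ S := aux_comm_top S h1S hstarS halg h3
    intro d₀ d₁ hd₀ hd₁ ψ hψ E₁ E₂ hE₁ hE₂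
    obtain ⟨q₁, L, hL, hLtp⟩ := hE₁
    obtain ⟨q₂, M, hM, hMtp⟩ := hE₂
    have hc₁ : ∀ X, (Φ ∘ₗ E₁) X
        = ∑ c : Fin p × Fin q₁, (K c.1 * L c.2) * X * (K c.1 * L c.2)ᴴ := by
      intro X
      rw [LinearMap.comp_apply, hK, Fintype.sum_prod_type]
      refine Finset.sum_congr rfl fun i _ => ?_
      rw [hL, Finset.mul_sum, Finset.sum_mul]
      refine Finset.sum_congr rfl fun a _ => ?_
      simp only [Matrix.conjTranspose_mul, Matrix.mul_assoc]
    have hc₂ : ∀ X, (Φ ∘ₗ E₂) X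
        = ∑ c : Fin p × Fin q₂, (K c.1 * M c.2) * X * (K c.1 * M c.2)ᴴ := by
      intro X
      rw [LinearMap.comp_apply, hK, Fintype.sum_prod_type]
      refine Finset.sum_congr rfl fun i _ => ?_
      rw [hM, Finset.mul_sum, Finset.sum_mul]
      refine Finset.sum_congr rfl fun a _ => ?_
      simp only [Matrix.conjTranspose_mul, Matrix.mul_assoc]
    rw [aux_tensorId_pure (Φ ∘ₗ E₁) _ hc₁ ψ, aux_tensorId_pure (Φ ∘ₗ E₂) _ hc₂ ψ]
    refine aux_trace_sum_pure_pos _ _ ?_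
    intro hall
    set σ : Matrix (Fin d₀) (Fin d₀) ℂ :=
      Matrix.of fun l k' => ∑ r, ψ (l, r) * star (ψ (k', r)) with hσdef
    have hz : ∀ (i : Fin p) (a : Fin q₁) (j : Fin p) (b : Fin q₂),
        (((K i * L a)ᴴ * (K j * M b)) * σ).trace = 0 := by
      intro i a j b
      rw [← aux_z_eq]
      exact hall (i, a) (j, b)
    have hz' : ∀ (a : Fin q₁) (b : Fin q₂) (X : Mat d),
        ((L a)ᴴ * (X * (M b * σ))).trace = 0 := by
      intro a b X
      have hXS := hStop X
      rw [hS] at hXS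
      induction hXS using Submodule.span_induction with
      | mem x h =>
        obtain ⟨i, j, rfl⟩ := h
        have h5 := hz i a j b
        simp only [Matrix.conjTranspose_mul, Matrix.mul_assoc] at h5 ⊢
        exact h5
      | zero => simp
      | add x y hx hy ihx ihy => simp [Matrix.mul_add, Matrix.add_mul, ihx, ihy]
      | smul c x hx ih => simp [Matrix.smul_mul, Matrix.mul_smul, ih]
    have hT0 : ∀ (a : Fin q₁) (b : Fin q₂), M b * σ * (L a)ᴴ = 0 := by
      intro a b
      apply aux_conj_self_trace_zero
      have h6 := hz' a b (M b * σ * (L a)ᴴ)ᴴ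
      rw [show ((M b * σ * (L a)ᴴ)ᴴ * (M b * σ * (L a)ᴴ))
            = ((M b * σ * (L a)ᴴ)ᴴ * (M b * σ)) * (L a)ᴴ from by
          simp only [Matrix.mul_assoc],
        Matrix.trace_mul_comm]
      rw [show (M b * σ * (L a)ᴴ)ᴴ * (M b * σ) = (M b * σ * (L a)ᴴ)ᴴ * (M b * σ) from rfl] at h6 ⊢
      simpa [Matrix.mul_assoc] using h6
    have hσL : ∀ a : Fin q₁, σ * (L a)ᴴ = 0 := by
      intro a
      have h7 : ∑ b, (M b)ᴴ * (M b * σ * (L a)ᴴ) = σ * (L a)ᴴ := by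
        have : ∑ b, (M b)ᴴ * (M b * σ * (L a)ᴴ) = (∑ b, (M b)ᴴ * M b) * (σ * (L a)ᴴ) := by
          rw [Matrix.sum_mul]
          exact Finset.sum_congr rfl fun b _ => by simp only [Matrix.mul_assoc]
        rw [this, hMtp, Matrix.one_mul]
      rw [← h7]
      exact Finset.sum_eq_zero fun b _ => by rw [hT0 a b, Matrix.mul_zero]
    have hσ0 : σ = 0 := by
      have h8 : σ = σ * ∑ a, (L a)ᴴ * L a := by rw [hLtp, Matrix.mul_one]
      rw [h8, Finset.mul_sum]
      exact Finset.sum_eq_zero fun a _ => by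
        rw [← Matrix.mul_assoc, hσL a, Matrix.zero_mul]
    have htr : σ.trace = 1 := by
      have h9 : σ.trace = ∑ l, ∑ r, ψ (l, r) * star (ψ (l, r)) := by
        simp [Matrix.trace, Matrix.diag, hσdef]
      rw [h9]
      rw [IsUnitVec, Fintype.sum_prod_type] at hψ
      rw [← hψ]
      exact Finset.sum_congr rfl fun l _ => Finset.sum_congr rfl fun r _ => mul_comm _ _
    rw [hσ0] at htr
    simp at htr
  -- vanishing C0E → (2)
  have lemC : VanishingC0E Φ → CScrambling Φ := by
    intro h ψ φ hψ hφ _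
    -- the state-preparation channels
    have hmk : ∀ v : Fin d → ℂ, IsUnitVec v →
        ∃ E : Matrix (Fin 1) (Fin 1) ℂ →ₗ[ℂ] Mat d,
          IsChannel E ∧ ∀ X, E X = X 0 0 • pureState v := by
      intro v hv
      refine ⟨{ toFun := fun X => X 0 0 • pureState v
                map_add' := fun X Y => by simp [Matrix.add_apply, add_smul]
                map_smul' := fun c X => by simp [Matrix.smul_apply, smul_smul] }, ?_, fun X => rfl⟩
      refine ⟨1, fun _ => Matrix.of fun a (_ : Fin 1) => v a, ?_, ?_⟩
      · intro X
        ext a b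
        simp only [LinearMap.coe_mk, AddHom.coe_mk, Matrix.smul_apply, smul_eq_mul,
          Finset.sum_apply, Fin.sum_univ_one, Matrix.mul_apply, Matrix.conjTranspose_apply,
          Matrix.of_apply, pureState]
        ring
      · ext u w
        have hu : u = 0 := Subsingleton.elim _ _
        have hw : w = 0 := Subsingleton.elim _ _
        subst hu; subst hw
        simp only [Fin.sum_univ_one, Matrix.mul_apply, Matrix.conjTranspose_apply,
          Matrix.of_apply, Matrix.one_apply_eq]
        simpa [IsUnitVec] using hv
    obtain ⟨Eψ, hEψ, hEψapp⟩ := hmk ψ hψ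
    obtain ⟨Eφ, hEφ, hEφapp⟩ := hmk φ hφ
    have hunit1 : IsUnitVec (fun _ : Fin 1 × Fin 1 => (1 : ℂ)) := by
      simp [IsUnitVec]
    have h0 := h 1 1 one_pos one_pos (fun _ => 1) hunit1 Eψ Eφ hEψ hEφ
    have hTid : ∀ (E : Matrix (Fin 1) (Fin 1) ℂ →ₗ[ℂ] Mat d) (v : Fin d → ℂ),
        (∀ X, E X = X 0 0 • pureState v) →
        tensorId (Φ ∘ₗ E) (pureState (fun _ : Fin 1 × Fin 1 => (1 : ℂ)))
          = Matrix.of fun p' q' : Fin d × Fin 1 => Φ (pureState v) p'.1 q'.1 := by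
      intro E v hE
      ext p' q'
      show (Φ ∘ₗ E) (Matrix.of fun k l =>
          pureState (fun _ : Fin 1 × Fin 1 => (1:ℂ)) (k, p'.2) (l, q'.2)) p'.1 q'.1 = _
      rw [LinearMap.comp_apply, hE]
      simp [pureState]
    rw [hTid Eψ ψ hEψapp, hTid Eφ φ hEφapp, aux_trace_prod_fin1] at h0
    exact h0
  -- assemble everything
  refine ⟨⟨lemC, fun h2 => lemB (lemD h2)⟩, ?_⟩
  constructor
  · intro h2 X
    constructor
    · exact lemD h2 X
    · rintro ⟨c, rfl⟩ Y hY
      rw [Matrix.smul_mul, Matrix.mul_smul, Matrix.one_mul, Matrix.mul_one]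
  · intro h3
    exact lemC (lemB fun X hX => (h3 X).mp hX)
end

section
/- Let A ∈ M_d(ℝ) be column stochastic. (i) For any CDUC channel Φ_{A,B} on M_d(ℂ): Φ_{A,B} is strictly positive if and only if A is entrywise strictly positive. (ii) For any DUC channel Φ_{A,C} on M_d(ℂ): Φ_{A,C} is strictly positive if and only if A is entrywise strictly positive. -/
open Matrix Filter
open scoped ComplexOrder

section SPAux

open Complex

lemma SP.quadform {d : ℕ} (M : Mat d) (x : Fin d → ℂ) :
    star x ⬝ᵥ M *ᵥ x = ∑ i, ∑ j, (starRingEnd ℂ) (x i) * M i j * x j := by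
  simp [dotProduct, mulVec, Finset.mul_sum, mul_assoc]

lemma SP.split_diag {d : ℕ} (F : Fin d → Fin d → ℂ) :
    ∑ i, ∑ j, F i j = ∑ i, F i i + ∑ i, ∑ j, (if j = i then 0 else F i j) := by
  rw [← Finset.sum_add_distrib]
  refine Finset.sum_congr rfl fun i _ => ?_
  have h1 : F i i = ∑ j, if j = i then F i j else 0 := by
    rw [Finset.sum_ite_eq' Finset.univ i (fun j => F i j)]; simp
  rw [h1, ← Finset.sum_add_distrib]
  refine Finset.sum_congr rfl fun j _ => ?_
  by_cases h : j = i <;> simp [h]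

lemma SP.double_sum_pos {d : ℕ} {f : Fin d → Fin d → ℝ} (h0 : ∀ i j, 0 ≤ f i j)
    (i j : Fin d) (h : 0 < f i j) : 0 < ∑ i, ∑ j, f i j := by
  refine Finset.sum_pos' (fun i _ => Finset.sum_nonneg fun j _ => h0 i j)
    ⟨i, Finset.mem_univ i, ?_⟩
  exact Finset.sum_pos' (fun j _ => h0 i j) ⟨j, Finset.mem_univ j, h⟩

lemma SP.pair_expand {d : ℕ} (M : Mat d) (i j : Fin d) (a b : ℂ) :
    star (Pi.single i a + Pi.single j b) ⬝ᵥ M *ᵥ (Pi.single i a + Pi.single j b)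
      = (starRingEnd ℂ) a * M i i * a + (starRingEnd ℂ) a * M i j * b
        + (starRingEnd ℂ) b * M j i * a + (starRingEnd ℂ) b * M j j * b := by
  simp only [star_add, ← Pi.single_star, add_dotProduct, dotProduct_add, mulVec_add,
    mulVec_single, single_dotProduct]
  simp only [Pi.add_apply, RCLike.star_def, Pi.smul_apply, col_apply, MulOpposite.smul_eq_mul_unop,
    MulOpposite.unop_op]
  ring

lemma SP.diag_nonneg {d : ℕ} {ρ : Mat d} (h : ρ.PosSemidef) (i : Fin d) :
    0 ≤ (ρ i i).re ∧ (ρ i i).im = 0 := by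
  have h2 := h.dotProduct_mulVec_nonneg (Pi.single i 1)
  have he : star (Pi.single i 1) ⬝ᵥ ρ *ᵥ (Pi.single i 1) = ρ i i := by
    rw [← Pi.single_star, single_dotProduct, mulVec_single]; simp
  rw [he, Complex.le_def] at h2
  exact ⟨by simpa using h2.1, by simpa using h2.2.symm⟩

lemma SP.diag_real {d : ℕ} {ρ : Mat d} (h : ρ.IsHermitian) (i : Fin d) :
    ρ i i = ((ρ i i).re : ℂ) := by
  have := congrFun (congrFun h i) i
  rw [conjTranspose_apply] at this
  exact (Complex.conj_eq_iff_re.mp this).symm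

lemma SP.herm_quad_real {d : ℕ} {M : Mat d} (h : M.IsHermitian) (x : Fin d → ℂ) :
    (star x ⬝ᵥ M *ᵥ x).im = 0 := by
  rw [← Complex.conj_eq_iff_im, SP.quadform, map_sum, Finset.sum_comm]
  refine Finset.sum_congr rfl fun i _ => ?_
  rw [map_sum]
  refine Finset.sum_congr rfl fun j _ => ?_
  have hM : (starRingEnd ℂ) (M i j) = M j i := by
    have := congrFun (congrFun h j) i
    rw [conjTranspose_apply] at this
    exact this
  simp only [_root_.map_mul, RingHomCompTriple.comp_apply, RingHom.id_apply, hM]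
  ring

/-- Cauchy–Schwarz for entries of a PSD matrix. -/
lemma SP.offdiag_sq {d : ℕ} {ρ : Mat d} (h : ρ.PosSemidef) (i j : Fin d) :
    Complex.normSq (ρ i j) ≤ (ρ i i).re * (ρ j j).re := by
  set z := ρ i j with hz
  rcases eq_or_ne z 0 with h0 | h0
  · rw [h0]
    simpa using mul_nonneg (SP.diag_nonneg h i).1 (SP.diag_nonneg h j).1
  have hji : ρ j i = (starRingEnd ℂ) z := by
    have : star (ρ j i) = ρ i j := by
      have := congrFun (congrFun h.1 i) j
      rwa [conjTranspose_apply] at this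
    rw [hz, ← this]; simp
  have hdri := SP.diag_real h.1 i
  have hdrj := SP.diag_real h.1 j
  have key : ∀ t : ℝ, 0 ≤ (Complex.normSq z * (ρ i i).re) * (t * t)
      + (-2 * Complex.normSq z) * t + (ρ j j).re := by
    intro t
    have hp := h.dotProduct_mulVec_nonneg (Pi.single i (-(t : ℂ) * z) + Pi.single j 1)
    have hexp : star (Pi.single i (-(t:ℂ)*z) + Pi.single j 1) ⬝ᵥ
        ρ *ᵥ (Pi.single i (-(t:ℂ)*z) + Pi.single j 1)
        = (((Complex.normSq z * (ρ i i).re) * (t * t)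
            + (-2 * Complex.normSq z) * t + (ρ j j).re : ℝ) : ℂ) := by
      rw [SP.pair_expand ρ i j (-(t:ℂ)*z) 1, hji, hdri, hdrj, ← hz]
      have hzz : z * (starRingEnd ℂ) z = (Complex.normSq z : ℂ) := Complex.mul_conj z
      push_cast
      simp only [map_neg, _root_.map_mul, _root_.map_one, Complex.conj_ofReal,
        Complex.ofReal_re, mul_one, one_mul]
      linear_combination ((t:ℂ)^2 * ((ρ i i).re:ℂ) - 2*(t:ℂ)) * hzz
    rw [hexp] at hp
    exact_mod_cast hp
  have hd := discrim_le_zero key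
  have hnz : 0 < Complex.normSq z := Complex.normSq_pos.mpr h0
  rw [discrim] at hd
  nlinarith [hd, hnz]

lemma SP.state_facts {d : ℕ} {ρ : Mat d} (h : IsState ρ) : ∃ r : Fin d → ℝ,
    (∀ k, ρ k k = (r k : ℂ)) ∧ (∀ k, 0 ≤ r k) ∧ (∑ k, r k = 1) ∧
    (∀ i j, Complex.normSq (ρ i j) ≤ r i * r j) ∧ ∃ k0, 0 < r k0 := by
  refine ⟨fun k => (ρ k k).re, fun k => SP.diag_real h.1.1 k, fun k => (SP.diag_nonneg h.1 k).1,
    ?_, fun i j => SP.offdiag_sq h.1 i j, ?_⟩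
  · have htr := h.2
    have : (ρ.trace).re = 1 := by rw [htr]; simp
    rw [Matrix.trace] at this
    simpa [Matrix.diag, Complex.re_sum] using this
  · by_contra hno
    push_neg at hno
    have h1 : ∑ k, (ρ k k).re ≤ 0 := Finset.sum_nonpos fun k _ => hno k
    have htr := h.2
    have h2 : (ρ.trace).re = 1 := by rw [htr]; simp
    rw [Matrix.trace] at h2
    simp only [Matrix.diag, Complex.re_sum] at h2
    rw [h2] at h1
    norm_num at h1

lemma SP.herm_entry {d : ℕ} {M : Mat d} (h : M.IsHermitian) (i j : Fin d) :
    (starRingEnd ℂ) (M i j) = M j i := by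
  have := congrFun (congrFun h j) i
  rwa [conjTranspose_apply] at this

lemma SP.cducMap_apply {d : ℕ} (A : Matrix (Fin d) (Fin d) ℝ) (B : Mat d) (X : Mat d)
    (i j : Fin d) :
    cducMap A B X i j = if i = j then ∑ k, (A i k : ℂ) * X k k else B i j * X i j := rfl

lemma SP.ducMap_apply {d : ℕ} (A : Matrix (Fin d) (Fin d) ℝ) (C : Mat d) (X : Mat d)
    (i j : Fin d) :
    ducMap A C X i j = if i = j then ∑ k, (A i k : ℂ) * X k k else C i j * X j i := rfl

lemma SP.basis_isState {d : ℕ} (j : Fin d) : IsState (Matrix.single j j (1:ℂ)) := by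
  have hd : Matrix.single j j (1:ℂ) = Matrix.diagonal (Pi.single j 1) := by
    ext k l
    by_cases hk : k = l
    · subst hk; by_cases hj : j = k <;>
        simp [Matrix.single, Matrix.diagonal, Pi.single_apply, hj, eq_comm]
    · have : ¬ (j = k ∧ j = l) := by rintro ⟨rfl, rfl⟩; exact hk rfl
      simp [Matrix.single, Matrix.diagonal, hk, this]
  rw [hd]
  constructor
  · refine Matrix.PosSemidef.diagonal ?_
    intro i
    by_cases hi : i = j <;> simp [Pi.single_apply, hi]
  · simp [Matrix.trace_diagonal, Pi.single_apply]

lemma SP.converse_aux {d : ℕ} (A : Matrix (Fin d) (Fin d) ℝ) (Φ : Mat d →ₗ[ℂ] Mat d)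
    (hΦ : ∀ j : Fin d, Φ (Matrix.single j j 1)
      = Matrix.diagonal (fun i => (A i j : ℂ)))
    (h : StrictlyPositive Φ) : MatStrictlyPositive A := by
  intro i j
  have hpd := h _ (SP.basis_isState j)
  rw [hΦ j] at hpd
  have hsingle : (Pi.single i (1:ℂ) : Fin d → ℂ) ≠ 0 := by
    intro hcon
    have : (Pi.single i (1:ℂ) : Fin d → ℂ) i = (0 : Fin d → ℂ) i := by rw [hcon]
    simp at this
  have hp := hpd.dotProduct_mulVec_pos hsingle
  have he : star (Pi.single i (1:ℂ)) ⬝ᵥ (Matrix.diagonal (fun i => (A i j : ℂ))) *ᵥ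
      (Pi.single i 1) = (A i j : ℂ) := by
    rw [← Pi.single_star, single_dotProduct, mulVec_single]
    simp [Matrix.diagonal]
  rw [he] at hp
  exact_mod_cast hp

lemma SP.cduc_on_basis {d : ℕ} (A : Matrix (Fin d) (Fin d) ℝ) (B : Mat d) (j : Fin d) :
    cducMap A B (Matrix.single j j 1) = Matrix.diagonal (fun i => (A i j : ℂ)) := by
  ext i k
  rw [SP.cducMap_apply]
  by_cases hik : i = k
  · subst hik
    have hterm : ∀ l : Fin d, (A i l : ℂ) * Matrix.single j j 1 l l
        = if l = j then (A i j : ℂ) else 0 := by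
      intro l
      by_cases hl : l = j
      · subst hl; rw [Matrix.single_apply_same, if_pos rfl, mul_one]
      · rw [Matrix.single_apply_of_ne _ _ _ _ _ (fun hcon => hl hcon.1.symm), if_neg hl, mul_zero]
    rw [if_pos rfl, Finset.sum_congr rfl fun l _ => hterm l]
    simp [Matrix.diagonal]
  · have hz : Matrix.single j j (1:ℂ) i k = 0 :=
      Matrix.single_apply_of_ne _ _ _ _ _ (by rintro ⟨rfl, rfl⟩; exact hik rfl)
    simp [hik, hz, Matrix.diagonal]

lemma SP.duc_on_basis {d : ℕ} (A : Matrix (Fin d) (Fin d) ℝ) (C : Mat d) (j : Fin d) :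
    ducMap A C (Matrix.single j j 1) = Matrix.diagonal (fun i => (A i j : ℂ)) := by
  ext i k
  rw [SP.ducMap_apply]
  by_cases hik : i = k
  · subst hik
    have hterm : ∀ l : Fin d, (A i l : ℂ) * Matrix.single j j 1 l l
        = if l = j then (A i j : ℂ) else 0 := by
      intro l
      by_cases hl : l = j
      · subst hl; rw [Matrix.single_apply_same, if_pos rfl, mul_one]
      · rw [Matrix.single_apply_of_ne _ _ _ _ _ (fun hcon => hl hcon.1.symm), if_neg hl, mul_zero]
    rw [if_pos rfl, Finset.sum_congr rfl fun l _ => hterm l]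
    simp [Matrix.diagonal]
  · have hz : Matrix.single j j (1:ℂ) k i = 0 :=
      Matrix.single_apply_of_ne _ _ _ _ _ (by rintro ⟨rfl, rfl⟩; exact hik rfl)
    simp [hik, hz, Matrix.diagonal]

open scoped MatrixOrder in
lemma SP.qb_nonneg {d : ℕ} {B ρ : Mat d} (hB : B.PosSemidef) (hρ : ρ.PosSemidef)
    (x : Fin d → ℂ) :
    0 ≤ ∑ i, ∑ j, (starRingEnd ℂ) (x i) * B i j * ρ i j * x j := by
  classical
  have hsq : CFC.sqrt ρ * CFC.sqrt ρ = ρ := CFC.sqrt_mul_sqrt_self ρ (Matrix.nonneg_iff_posSemidef.mpr hρ)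
  set S := CFC.sqrt ρ with hS
  have hSh : S.IsHermitian := (Matrix.nonneg_iff_posSemidef.mp (CFC.sqrt_nonneg ρ)).1
  have key : ∑ k, (star (fun i => x i * (starRingEnd ℂ) (S i k)) ⬝ᵥ
        B *ᵥ (fun i => x i * (starRingEnd ℂ) (S i k)))
      = ∑ i, ∑ j, (starRingEnd ℂ) (x i) * B i j * ρ i j * x j := by
    calc ∑ k, (star (fun i => x i * (starRingEnd ℂ) (S i k)) ⬝ᵥ
          B *ᵥ (fun i => x i * (starRingEnd ℂ) (S i k)))
        = ∑ k, ∑ i, ∑ j, (starRingEnd ℂ) (x i * (starRingEnd ℂ) (S i k)) * B i j *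
            (x j * (starRingEnd ℂ) (S j k)) :=
          Finset.sum_congr rfl fun k _ => SP.quadform B _
      _ = ∑ i, ∑ k, ∑ j, (starRingEnd ℂ) (x i * (starRingEnd ℂ) (S i k)) * B i j *
            (x j * (starRingEnd ℂ) (S j k)) := Finset.sum_comm
      _ = ∑ i, ∑ j, ∑ k, (starRingEnd ℂ) (x i * (starRingEnd ℂ) (S i k)) * B i j *
            (x j * (starRingEnd ℂ) (S j k)) :=
          Finset.sum_congr rfl fun i _ => Finset.sum_comm
      _ = ∑ i, ∑ j, (starRingEnd ℂ) (x i) * B i j * ρ i j * x j := by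
          refine Finset.sum_congr rfl fun i _ => Finset.sum_congr rfl fun j _ => ?_
          have h2 : ∀ k, (starRingEnd ℂ) (x i * (starRingEnd ℂ) (S i k)) * B i j *
              (x j * (starRingEnd ℂ) (S j k))
              = ((starRingEnd ℂ) (x i) * B i j * x j) * (S i k * S k j) := by
            intro k
            have hskj : S k j = (starRingEnd ℂ) (S j k) := (SP.herm_entry hSh j k).symm
            rw [hskj]
            simp only [_root_.map_mul, RingHomCompTriple.comp_apply, RingHom.id_apply]
            ring
          rw [Finset.sum_congr rfl fun k _ => h2 k, ← Finset.mul_sum, ← Matrix.mul_apply, hsq]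
          ring
  rw [← key]
  exact Finset.sum_nonneg fun k _ => hB.dotProduct_mulVec_nonneg _

lemma SP.cduc_posdef {d : ℕ} {A : Matrix (Fin d) (Fin d) ℝ} {B : Mat d}
    (hApos : MatStrictlyPositive A)
    (hB : B.PosSemidef) (hBA : ∀ i, B i i = (A i i : ℂ))
    {ρ : Mat d} (hρ : IsState ρ) : (cducMap A B ρ).PosDef := by
  classical
  obtain ⟨r, hdr, hrn, htr, hcs, k0, hk0⟩ := SP.state_facts hρ
  have hherm : (cducMap A B ρ).IsHermitian := by
    ext i j
    rw [conjTranspose_apply, SP.cducMap_apply, SP.cducMap_apply, Complex.star_def]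
    by_cases h : j = i
    · subst h
      simp only [eq_self_iff_true, if_true]
      rw [map_sum]
      refine Finset.sum_congr rfl fun k _ => ?_
      rw [_root_.map_mul, hdr k]
      simp [Complex.conj_ofReal]
    · rw [if_neg h, if_neg (fun hc => h hc.symm), _root_.map_mul,
        SP.herm_entry hB.1 j i, SP.herm_entry hρ.1.1 j i]
  refine Matrix.PosDef.of_dotProduct_mulVec_pos hherm fun x hx => ?_
  obtain ⟨i0, hxi0⟩ : ∃ i, x i ≠ 0 := by
    by_contra hno
    push_neg at hno
    exact hx (funext fun i => hno i)
  rw [SP.quadform]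
  have hq : ∑ i, ∑ j, (starRingEnd ℂ) (x i) * cducMap A B ρ i j * x j
      = (∑ i, ∑ j, (starRingEnd ℂ) (x i) * B i j * ρ i j * x j)
        + ((∑ i, Complex.normSq (x i) * ((∑ k, A i k * r k) - A i i * r i) : ℝ) : ℂ) := by
    have e1 := SP.split_diag (fun i j => (starRingEnd ℂ) (x i) * cducMap A B ρ i j * x j)
    have e2 := SP.split_diag (fun i j => (starRingEnd ℂ) (x i) * B i j * ρ i j * x j)
    rw [e1, e2]
    have e3 : (∑ i, ∑ j, (if j = i then 0 else (starRingEnd ℂ) (x i) * cducMap A B ρ i j * x j))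
        = ∑ i, ∑ j, (if j = i then 0 else (starRingEnd ℂ) (x i) * B i j * ρ i j * x j) := by
      refine Finset.sum_congr rfl fun i _ => Finset.sum_congr rfl fun j _ => ?_
      by_cases h : j = i
      · simp [h]
      · rw [if_neg h, if_neg h, SP.cducMap_apply, if_neg (fun hc => h hc.symm)]
        ring
    have e4 : ∀ i, (starRingEnd ℂ) (x i) * cducMap A B ρ i i * x i
        = (starRingEnd ℂ) (x i) * B i i * ρ i i * x i
          + ((Complex.normSq (x i) * ((∑ k, A i k * r k) - A i i * r i) : ℝ) : ℂ) := by
      intro i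
      have hxx : (starRingEnd ℂ) (x i) * x i = (Complex.normSq (x i) : ℂ) := by
        rw [mul_comm]; exact Complex.mul_conj _
      rw [SP.cducMap_apply, if_pos rfl, hBA i, hdr i]
      have hsum : ∑ k, (A i k : ℂ) * ρ k k = ((∑ k, A i k * r k : ℝ) : ℂ) := by
        push_cast
        exact Finset.sum_congr rfl fun k _ => by rw [hdr k]
      rw [hsum, Complex.ofReal_mul, Complex.ofReal_sub, Complex.ofReal_mul]
      linear_combination (((∑ k, A i k * r k : ℝ) : ℂ) - ((A i i : ℝ) : ℂ) * ((r i : ℝ) : ℂ)) * hxx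
    have e5 : ((∑ i, Complex.normSq (x i) * ((∑ k, A i k * r k) - A i i * r i) : ℝ) : ℂ)
        = ∑ i, ((Complex.normSq (x i) * ((∑ k, A i k * r k) - A i i * r i) : ℝ) : ℂ) := by
      push_cast; rfl
    rw [e3, Finset.sum_congr rfl fun i _ => e4 i, Finset.sum_add_distrib, e5]
    ring
  rw [hq]
  have hQDnn : ∀ i, 0 ≤ Complex.normSq (x i) * ((∑ k, A i k * r k) - A i i * r i) := by
    intro i
    refine mul_nonneg (Complex.normSq_nonneg _) ?_
    have : A i i * r i ≤ ∑ k, A i k * r k :=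
      Finset.single_le_sum (fun k _ => mul_nonneg (hApos i k).le (hrn k)) (Finset.mem_univ i)
    linarith
  by_cases hc : ∃ i j, x i ≠ 0 ∧ 0 < r j ∧ i ≠ j
  · obtain ⟨i, j, hxi, hrj, hij⟩ := hc
    refine add_pos_of_nonneg_of_pos (SP.qb_nonneg hB hρ.1 x) ?_
    rw [Complex.zero_lt_real]
    refine Finset.sum_pos' (fun i _ => hQDnn i) ⟨i, Finset.mem_univ i, ?_⟩
    refine mul_pos (Complex.normSq_pos.mpr hxi) ?_
    have h1 : A i i * r i + ∑ k ∈ Finset.univ.erase i, A i k * r k = ∑ k, A i k * r k :=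
      Finset.add_sum_erase Finset.univ (fun k => A i k * r k) (Finset.mem_univ i)
    have h2 : A i j * r j ≤ ∑ k ∈ Finset.univ.erase i, A i k * r k :=
      Finset.single_le_sum (fun k _ => mul_nonneg (hApos i k).le (hrn k))
        (Finset.mem_erase.mpr ⟨fun hc => hij hc.symm, Finset.mem_univ j⟩)
    have h3 : 0 < A i j * r j := mul_pos (hApos i j) hrj
    linarith
  · push_neg at hc
    have hik : i0 = k0 := hc i0 k0 hxi0 hk0
    have hxz : ∀ j, j ≠ k0 → x j = 0 := by
      intro j hj
      by_contra hxj
      exact hj (hc j k0 hxj hk0)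
    refine add_pos_of_pos_of_nonneg ?_ ?_
    · have hQB : ∑ i, ∑ j, (starRingEnd ℂ) (x i) * B i j * ρ i j * x j
          = ((Complex.normSq (x k0) * A k0 k0 * r k0 : ℝ) : ℂ) := by
        rw [Finset.sum_eq_single k0]
        · rw [Finset.sum_eq_single k0]
          · have hxx : (starRingEnd ℂ) (x k0) * x k0 = (Complex.normSq (x k0) : ℂ) := by
              rw [mul_comm]; exact Complex.mul_conj _
            rw [hBA k0, hdr k0]
            push_cast
            linear_combination ((A k0 k0 : ℂ) * (r k0 : ℂ)) * hxx
          · intro j _ hj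
            rw [hxz j hj]; ring
          · intro hcon; exact absurd (Finset.mem_univ k0) hcon
        · intro i _ hi
          refine Finset.sum_eq_zero fun j _ => ?_
          rw [hxz i hi]; simp
        · intro hcon; exact absurd (Finset.mem_univ k0) hcon
      rw [hQB, Complex.zero_lt_real]
      have hA00 := hApos k0 k0
      have hxk0 : x k0 ≠ 0 := hik ▸ hxi0
      exact mul_pos (mul_pos (Complex.normSq_pos.mpr hxk0) hA00) hk0
    · rw [Complex.le_def]
      constructor
      · simpa using Finset.sum_nonneg fun i (_ : i ∈ Finset.univ) => hQDnn i
      · simp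

lemma SP.duc_posdef {d : ℕ} {A : Matrix (Fin d) (Fin d) ℝ} {C : Mat d}
    (hApos : MatStrictlyPositive A) (hC : C.IsHermitian)
    (hCA : ∀ i j, i ≠ j → Complex.normSq (C i j) ≤ A i j * A j i)
    {ρ : Mat d} (hρ : IsState ρ) : (ducMap A C ρ).PosDef := by
  classical
  obtain ⟨r, hdr, hrn, htr, hcs, k0, hk0⟩ := SP.state_facts hρ
  have hherm : (ducMap A C ρ).IsHermitian := by
    ext i j
    rw [conjTranspose_apply, SP.ducMap_apply, SP.ducMap_apply, Complex.star_def]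
    by_cases h : j = i
    · subst h
      simp only [eq_self_iff_true, if_true]
      rw [map_sum]
      refine Finset.sum_congr rfl fun k _ => ?_
      rw [_root_.map_mul, hdr k]
      simp [Complex.conj_ofReal]
    · rw [if_neg h, if_neg (fun hc => h hc.symm), _root_.map_mul,
        SP.herm_entry hC j i, SP.herm_entry hρ.1.1 i j]
  refine Matrix.PosDef.of_dotProduct_mulVec_pos hherm fun x hx => ?_
  obtain ⟨i0, hxi0⟩ : ∃ i, x i ≠ 0 := by
    by_contra hno
    push_neg at hno
    exact hx (funext fun i => hno i)
  set e : Fin d → Fin d → ℝ := fun i j => Complex.normSq (x i) * A i j * r j with he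
  set c : Fin d → Fin d → ℝ :=
    fun i j => ((starRingEnd ℂ) (x i) * C i j * ρ j i * x j).re with hcdef
  set g : Fin d → Fin d → ℝ :=
    fun i j => (if i = j then -(c i i) else 0) + (e i j + e j i)/2 + c i j with hgdef
  have hen : ∀ i j, 0 ≤ e i j := by
    intro i j
    simp only [he]
    exact mul_nonneg (mul_nonneg (Complex.normSq_nonneg _) (hApos i j).le) (hrn j)
  have him : (star x ⬝ᵥ ducMap A C ρ *ᵥ x).im = 0 := SP.herm_quad_real hherm x
  have hterm : ∀ i j, ((starRingEnd ℂ) (x i) * ducMap A C ρ i j * x j).re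
      = (if i = j then (∑ k, e i k) - c i i else 0) + c i j := by
    intro i j
    by_cases h : i = j
    · subst h
      rw [if_pos rfl, SP.ducMap_apply]
      simp only [eq_self_iff_true, if_true]
      have hxx : (starRingEnd ℂ) (x i) * x i = (Complex.normSq (x i) : ℂ) := by
        rw [mul_comm]; exact Complex.mul_conj _
      have hsum : ∑ k, (A i k : ℂ) * ρ k k = ((∑ k, A i k * r k : ℝ) : ℂ) := by
        push_cast
        exact Finset.sum_congr rfl fun k _ => by rw [hdr k]
      have h1 : (starRingEnd ℂ) (x i) * (∑ k, (A i k : ℂ) * ρ k k) * x i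
          = ((∑ k, e i k : ℝ) : ℂ) := by
        have h2 : ∑ k, e i k = Complex.normSq (x i) * ∑ k, A i k * r k := by
          rw [Finset.mul_sum]
          exact Finset.sum_congr rfl fun k _ => by simp only [he]; ring
        rw [hsum, h2, Complex.ofReal_mul]
        linear_combination (((∑ k, A i k * r k : ℝ) : ℂ)) * hxx
      rw [h1, Complex.ofReal_re]
      ring
    · rw [if_neg h, SP.ducMap_apply, if_neg h]
      have hassoc : (starRingEnd ℂ) (x i) * (C i j * ρ j i) * x j
          = (starRingEnd ℂ) (x i) * C i j * ρ j i * x j := by ring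
      rw [hassoc, zero_add]
  have hre : (star x ⬝ᵥ ducMap A C ρ *ᵥ x).re = ∑ i, ∑ j, g i j := by
    rw [SP.quadform, Complex.re_sum]
    simp only [Complex.re_sum]
    calc ∑ i, ∑ j, ((starRingEnd ℂ) (x i) * ducMap A C ρ i j * x j).re
        = ∑ i, ∑ j, ((if i = j then (∑ k, e i k) - c i i else 0) + c i j) :=
          Finset.sum_congr rfl fun i _ => Finset.sum_congr rfl fun j _ => hterm i j
      _ = ∑ i, ∑ j, g i j := by
          have h1 : ∀ i : Fin d, ∑ j, (if i = j then (∑ k, e i k) - c i i else 0)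
              = (∑ k, e i k) - c i i := by
            intro i
            rw [Finset.sum_ite_eq Finset.univ i (fun _ => (∑ k, e i k) - c i i)]
            simp
          have h2 : ∀ i : Fin d, ∑ j, (if i = j then -(c i i) else 0) = -(c i i) := by
            intro i
            rw [Finset.sum_ite_eq Finset.univ i (fun _ => -(c i i))]
            simp
          have h3 : ∑ i, ∑ j, (e i j + e j i)/2 = ∑ i, ∑ j, e i j := by
            have h4 : ∑ i, ∑ j, (e i j + e j i) = ∑ i, ∑ j, (2 * e i j) := by
              simp only [Finset.sum_add_distrib]
              have hsw : ∑ i, ∑ j, e j i = ∑ i, ∑ j, e i j := Finset.sum_comm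
              rw [hsw]
              simp only [two_mul, Finset.sum_add_distrib]
            calc ∑ i, ∑ j, (e i j + e j i)/2
                = (∑ i, ∑ j, (e i j + e j i))/2 := by simp only [Finset.sum_div]
              _ = (∑ i, ∑ j, 2 * e i j)/2 := by rw [h4]
              _ = ∑ i, ∑ j, e i j := by
                  have h5 : ∑ i, ∑ j, (2:ℝ) * e i j = 2 * ∑ i, ∑ j, e i j := by
                    simp only [← Finset.mul_sum]
                  rw [h5]
                  ring
          simp only [hgdef, Finset.sum_add_distrib]
          rw [Finset.sum_congr rfl fun i (_ : i ∈ Finset.univ) => h1 i,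
            Finset.sum_congr rfl fun i (_ : i ∈ Finset.univ) => h2 i, h3,
            Finset.sum_sub_distrib]
          rw [Finset.sum_neg_distrib]
          ring
  have hg0 : ∀ i j, 0 ≤ g i j := by
    intro i j
    by_cases h : i = j
    · subst h
      simp only [hgdef, eq_self_iff_true, if_true]
      have := hen i i
      linarith
    · simp only [hgdef, if_neg h]
      have hcb : |c i j| ≤ Real.sqrt (e i j * e j i) := by
        have habs : |c i j| ≤ ‖((starRingEnd ℂ) (x i) * C i j * ρ j i * x j)‖ := by
          simp only [hcdef]
          exact Complex.abs_re_le_norm _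
        have hnsq : Complex.normSq ((starRingEnd ℂ) (x i) * C i j * ρ j i * x j)
            ≤ e i j * e j i := by
          have hexp : Complex.normSq ((starRingEnd ℂ) (x i) * C i j * ρ j i * x j)
              = (Complex.normSq (x i) * Complex.normSq (x j)) *
                (Complex.normSq (C i j) * Complex.normSq (ρ j i)) := by
            simp only [Complex.normSq_mul, Complex.normSq_conj]
            ring
          have hb1 : Complex.normSq (C i j) * Complex.normSq (ρ j i)
              ≤ (A i j * A j i) * (r j * r i) := by
            refine mul_le_mul (hCA i j h) (hcs j i) (Complex.normSq_nonneg _) ?_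
            exact mul_nonneg (hApos i j).le (hApos j i).le
          have hb2 : 0 ≤ Complex.normSq (x i) * Complex.normSq (x j) :=
            mul_nonneg (Complex.normSq_nonneg _) (Complex.normSq_nonneg _)
          have heq : e i j * e j i
              = (Complex.normSq (x i) * Complex.normSq (x j)) * ((A i j * A j i) * (r j * r i)) := by
            simp only [he]; ring
          rw [hexp, heq]
          exact mul_le_mul_of_nonneg_left hb1 hb2
        have : ‖((starRingEnd ℂ) (x i) * C i j * ρ j i * x j)‖
            ≤ Real.sqrt (e i j * e j i) := by
          rw [Complex.norm_def]
          exact Real.sqrt_le_sqrt hnsq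
        linarith
      have hamgm : Real.sqrt (e i j * e j i) ≤ (e i j + e j i)/2 := by
        have ha := hen i j
        have hb := hen j i
        rw [Real.sqrt_mul ha]
        nlinarith [sq_nonneg (Real.sqrt (e i j) - Real.sqrt (e j i)), Real.sq_sqrt ha,
          Real.sq_sqrt hb, Real.sqrt_nonneg (e i j), Real.sqrt_nonneg (e j i)]
      have hneg := neg_abs_le (c i j)
      linarith
  have hstrict : 0 < ∑ i, ∑ j, g i j := by
    by_cases hri : 0 < r i0
    · refine SP.double_sum_pos hg0 i0 i0 ?_
      simp only [hgdef, eq_self_iff_true, if_true]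
      have he0 : 0 < e i0 i0 := by
        simp only [he]
        exact mul_pos (mul_pos (Complex.normSq_pos.mpr hxi0) (hApos i0 i0)) hri
      linarith
    · have hr0 : r i0 = 0 := le_antisymm (not_lt.mp hri) (hrn i0)
      have hne : i0 ≠ k0 := by
        intro hcon
        rw [hcon] at hr0
        exact hk0.ne' hr0
      have hρ0 : ρ k0 i0 = 0 := by
        have hle := hcs k0 i0
        rw [hr0, mul_zero] at hle
        exact Complex.normSq_eq_zero.mp (le_antisymm hle (Complex.normSq_nonneg _))
      refine SP.double_sum_pos hg0 i0 k0 ?_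
      simp only [hgdef, if_neg hne]
      have hc0 : c i0 k0 = 0 := by
        simp only [hcdef]
        rw [hρ0]
        simp
      have he2 : e k0 i0 = 0 := by
        simp only [he]
        rw [hr0, mul_zero]
      have he1 : 0 < e i0 k0 := by
        simp only [he]
        exact mul_pos (mul_pos (Complex.normSq_pos.mpr hxi0) (hApos i0 k0)) hk0
      rw [hc0, he2]
      linarith
  rw [Complex.lt_def]
  constructor
  · rw [Complex.zero_re, hre]
    exact hstrict
  · rw [Complex.zero_im, him]

end SPAux

/-- A CDUC channel `Φ_{A,B}` (resp. DUC channel `Φ_{A,C}`) is strictly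
positive if and only if `A` is entrywise strictly positive. -/
theorem duc_strictly_positive_iff (d : ℕ) (A : Matrix (Fin d) (Fin d) ℝ)
    (hA : ColumnStochastic A) :
    (∀ B : Mat d, B.PosSemidef → (∀ i, B i i = (A i i : ℂ)) →
      (StrictlyPositive (cducMap A B) ↔ MatStrictlyPositive A)) ∧
    (∀ C : Mat d, C.IsHermitian →
      (∀ i j, i ≠ j → Complex.normSq (C i j) ≤ A i j * A j i) →
      (StrictlyPositive (ducMap A C) ↔ MatStrictlyPositive A)) := by
  constructor
  · intro B hB hBA
    constructor
    · intro hSP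
      exact SP.converse_aux A (cducMap A B) (fun j => SP.cduc_on_basis A B j) hSP
    · intro hApos ρ hρ
      exact SP.cduc_posdef hApos hB hBA hρ
  · intro C hC hCA
    constructor
    · intro hSP
      exact SP.converse_aux A (ducMap A C) (fun j => SP.duc_on_basis A C j) hSP
    · intro hApos ρ hρ
      exact SP.duc_posdef hApos hC hCA hρ
end
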